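/- arXiv:1405.6560 — 3 statements merged into one kernel-verified Lean document; each statement's English description precedes it below -/
import Mathlib

section
/- For any ε > 0 there exist β = β(ε) > 0 and n₀ = n₀(ε) ∈ ℕ such that the following holds. For every tree T with |T| = n ≥ n₀ vertices and every subset L ⊆ V(T), there are subtrees S, T₁, T₂ of T covering T (every vertex of T lies in one of them) such that |S| ≤ εn, S contains at least β|L| vertices of L, and T₁ and T₂ are vertex-disjoint and each intersects S in exactly one vertex. -/
open SimpleGraph Finset

set_option linter.unusedSectionVars false
set_option linter.unusedVariables false

namespace Stmt10

variable {V : Type*} [Fintype V] [DecidableEq V] {T : SimpleGraph V}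

/-- Reachability inside a finite vertex set `W` (via a walk whose support lies in `W`). -/
def RIn (T : SimpleGraph V) (W : Finset V) (x y : V) : Prop :=
  ∃ w : T.Walk x y, ∀ z ∈ w.support, z ∈ W

lemma RIn.mem_left {W : Finset V} {x y : V} (h : RIn T W x y) : x ∈ W := by
  obtain ⟨w, hw⟩ := h; exact hw _ w.start_mem_support

lemma RIn.mem_right {W : Finset V} {x y : V} (h : RIn T W x y) : y ∈ W := by
  obtain ⟨w, hw⟩ := h; exact hw _ w.end_mem_support

lemma RIn.refl {W : Finset V} {x : V} (hx : x ∈ W) : RIn T W x x :=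
  ⟨SimpleGraph.Walk.nil, by simp [hx]⟩

lemma RIn.symm {W : Finset V} {x y : V} (h : RIn T W x y) : RIn T W y x := by
  obtain ⟨w, hw⟩ := h
  exact ⟨w.reverse, by simpa using hw⟩

lemma RIn.trans {W : Finset V} {x y z : V} (h : RIn T W x y) (h' : RIn T W y z) :
    RIn T W x z := by
  obtain ⟨w, hw⟩ := h; obtain ⟨w', hw'⟩ := h'
  refine ⟨w.append w', ?_⟩
  intro u hu
  rw [SimpleGraph.Walk.support_append] at hu
  rcases List.mem_append.1 hu with h1 | h1
  · exact hw _ h1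
  · exact hw' _ (List.mem_of_mem_tail h1)

lemma RIn.mono {W W' : Finset V} (hWW : W ⊆ W') {x y : V} (h : RIn T W x y) :
    RIn T W' x y := by
  obtain ⟨w, hw⟩ := h; exact ⟨w, fun z hz => hWW (hw z hz)⟩

lemma RIn.adj {W : Finset V} {x y : V} (hx : x ∈ W) (hy : y ∈ W) (h : T.Adj x y) :
    RIn T W x y :=
  ⟨h.toWalk, by simp [hx, hy]⟩

/-- From reachability through a walk we get reachability to every support vertex. -/
lemma RIn.to_support {W : Finset V} {x y : V} (w : T.Walk x y)
    (hw : ∀ z ∈ w.support, z ∈ W) {z : V} (hz : z ∈ w.support) : RIn T W x z :=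
  ⟨w.takeUntil z hz, fun u hu => hw _ (SimpleGraph.Walk.support_takeUntil_subset w hz hu)⟩

/-- A set closed under adjacency (within an ambient set `W`) absorbs walks. -/
lemma support_closure {x y : V} (w : T.Walk x y) (W S : Finset V)
    (hsupp : ∀ z ∈ w.support, z ∈ W) (hx : x ∈ S)
    (hcl : ∀ a b, a ∈ S → b ∈ W → T.Adj a b → b ∈ S) :
    ∀ z ∈ w.support, z ∈ S := by
  induction w with
  | nil => intro z hz; simp at hz; subst hz; exact hx
  | @cons a b c hadj w ih =>
      intro z hz
      have hb : b ∈ S := hcl a b hx (hsupp b (by simp)) hadj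
      rcases List.mem_cons.1 (by simpa using hz) with h1 | h1
      · subst h1; exact hx
      · exact ih (fun u hu => hsupp u (by simp [hu])) hb z h1

/-- Connectivity of a finset via confined walks. -/
def ConnIn (T : SimpleGraph V) (W : Finset V) : Prop :=
  ∀ x ∈ W, ∀ y ∈ W, RIn T W x y

lemma connIn_univ (hT : T.Connected) : ConnIn T (univ : Finset V) := by
  intro x _ y _
  obtain ⟨w⟩ := hT.preconnected x y
  exact ⟨w, fun z _ => mem_univ z⟩

lemma reachable_induce_of_walk {W : Finset V} {x y : V} (w : T.Walk x y)
    (hw : ∀ z ∈ w.support, z ∈ W) :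
    (T.induce (↑W : Set V)).Reachable ⟨x, by exact_mod_cast hw x w.start_mem_support⟩
      ⟨y, by exact_mod_cast hw y w.end_mem_support⟩ := by
  induction w with
  | nil => rfl
  | @cons a b c hadj w ih =>
      have hb : b ∈ W := hw b (by simp)
      have h1 : (T.induce (↑W : Set V)).Adj ⟨a, by exact_mod_cast hw a (by simp)⟩
          ⟨b, by exact_mod_cast hb⟩ := by
        show T.Adj a b
        exact hadj
      exact (h1.reachable).trans (ih (fun z hz => hw z (by simp [hz])))

lemma isSubtree_of_connIn {W : Finset V} (hne : W.Nonempty) (hconn : ConnIn T W) :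
    W.Nonempty ∧ (T.induce (↑W : Set V)).Connected := by
  refine ⟨hne, ?_⟩
  rw [connected_iff]
  constructor
  · rintro ⟨a, ha⟩ ⟨b, hb⟩
    have ha' : a ∈ W := by exact_mod_cast ha
    have hb' : b ∈ W := by exact_mod_cast hb
    obtain ⟨w, hw⟩ := hconn a ha' b hb'
    exact reachable_induce_of_walk w hw
  · obtain ⟨a, ha⟩ := hne
    exact ⟨⟨a, by exact_mod_cast ha⟩⟩

/-! ### Components of `K \ {c}` -/

open scoped Classical in
noncomputable def cmp (T : SimpleGraph V) (K : Finset V) (c : V) (x : V) : Finset V :=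
  (K.erase c).filter (fun y => RIn T (K.erase c) x y)

lemma mem_cmp {K : Finset V} {c x y : V} :
    y ∈ cmp T K c x ↔ y ∈ K.erase c ∧ RIn T (K.erase c) x y := by
  classical simp [cmp]

lemma cmp_subset {K : Finset V} {c x : V} : cmp T K c x ⊆ K.erase c := by
  intro y hy; exact (mem_cmp.1 hy).1

lemma mem_cmp_self {K : Finset V} {c x : V} (hx : x ∈ K.erase c) : x ∈ cmp T K c x :=
  mem_cmp.2 ⟨hx, RIn.refl hx⟩

lemma cmp_closure {K : Finset V} {c x a b : V} (ha : a ∈ cmp T K c x)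
    (hb : b ∈ K.erase c) (hadj : T.Adj a b) : b ∈ cmp T K c x := by
  obtain ⟨ha1, ha2⟩ := mem_cmp.1 ha
  exact mem_cmp.2 ⟨hb, ha2.trans (RIn.adj ha1 hb hadj)⟩

lemma cmp_eq_of_mem {K : Finset V} {c x y : V} (hy : y ∈ cmp T K c x) :
    cmp T K c y = cmp T K c x := by
  obtain ⟨hy1, hy2⟩ := mem_cmp.1 hy
  ext z
  simp only [mem_cmp]
  exact ⟨fun ⟨h1, h2⟩ => ⟨h1, hy2.trans h2⟩, fun ⟨h1, h2⟩ => ⟨h1, hy2.symm.trans h2⟩⟩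

lemma cmp_eq_or_disjoint {K : Finset V} {c x y : V} :
    cmp T K c x = cmp T K c y ∨ Disjoint (cmp T K c x) (cmp T K c y) := by
  by_cases h : Disjoint (cmp T K c x) (cmp T K c y)
  · exact Or.inr h
  · left
    obtain ⟨z, hz⟩ := Finset.not_disjoint_iff.1 h
    rw [← cmp_eq_of_mem hz.1, cmp_eq_of_mem hz.2]

lemma connIn_cmp {K : Finset V} {c x : V} : ConnIn T (cmp T K c x) := by
  intro y hy z hz
  obtain ⟨hy1, hy2⟩ := mem_cmp.1 hy
  obtain ⟨hz1, hz2⟩ := mem_cmp.1 hz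
  obtain ⟨w, hw⟩ := hy2.symm.trans hz2
  refine ⟨w, fun u hu => ?_⟩
  exact mem_cmp.2 ⟨hw u hu, hy2.trans (RIn.to_support w hw hu)⟩

lemma cmp_nonempty {K : Finset V} {c x : V} (hx : x ∈ K.erase c) :
    (cmp T K c x).Nonempty := ⟨x, mem_cmp_self hx⟩

/-- Every component of `K \ {c}` has a vertex adjacent to `c` (when `K` is connected). -/
lemma exists_adj_c {K : Finset V} {c : V} (hK : ConnIn T K) (hc : c ∈ K) :
    ∀ x ∈ K.erase c, ∃ z, z ∈ cmp T K c x ∧ T.Adj z c := by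
  have aux : ∀ (N : ℕ) (x : V) (w : T.Walk x c), w.length ≤ N → (∀ z ∈ w.support, z ∈ K) →
      x ≠ c → ∃ z, T.Adj z c ∧ RIn T (K.erase c) x z := by
    intro N
    induction N with
    | zero =>
        intro x w hlen hsupp hxc
        cases w with
        | nil => exact absurd rfl hxc
        | cons h w => simp at hlen
    | succ N ih =>
        intro x w hlen hsupp hxc
        cases w with
        | nil => exact absurd rfl hxc
        | @cons _ b _ hadj w' =>
            have ha : x ∈ K := hsupp x (by simp)
            have hb : b ∈ K := hsupp b (by simp)
            by_cases hbc : b = c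
            · subst hbc
              exact ⟨x, hadj, RIn.refl (Finset.mem_erase.2 ⟨hxc, ha⟩)⟩
            · have hlen' : w'.length ≤ N := by
                have : w'.length + 1 ≤ N + 1 := by simpa using hlen
                omega
              obtain ⟨z, hz1, hz2⟩ := ih b w' hlen' (fun u hu => hsupp u (by simp [hu])) hbc
              refine ⟨z, hz1, ?_⟩
              exact (RIn.adj (Finset.mem_erase.2 ⟨hxc, ha⟩) (Finset.mem_erase.2 ⟨hbc, hb⟩)
                hadj).trans hz2
  intro x hx
  obtain ⟨hxc, hxK⟩ := Finset.mem_erase.1 hx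
  obtain ⟨w, hw⟩ := hK x hxK c hc
  obtain ⟨z, hz1, hz2⟩ := aux w.length x w le_rfl hw hxc
  exact ⟨z, mem_cmp.2 ⟨hz2.mem_right, hz2⟩, hz1⟩

/-- In a tree, `c` has at most one neighbour in each component of `K \ {c}`. -/
lemma unique_adj_c (hT : T.IsTree) {K : Finset V} {c x : V} {z₁ z₂ : V}
    (h1 : z₁ ∈ cmp T K c x) (h2 : z₂ ∈ cmp T K c x)
    (ha1 : T.Adj z₁ c) (ha2 : T.Adj z₂ c) : z₁ = z₂ := by
  by_contra hne
  obtain ⟨h11, h12⟩ := mem_cmp.1 h1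
  obtain ⟨h21, h22⟩ := mem_cmp.1 h2
  obtain ⟨w, hw⟩ := h12.symm.trans h22
  have hc1 : z₁ ≠ c := (Finset.mem_erase.1 h11).1
  have hc2 : z₂ ≠ c := (Finset.mem_erase.1 h21).1
  have hcsupp : c ∉ (w.toPath : T.Walk z₁ z₂).support := by
    intro hmem
    have h := Walk.support_toPath_subset w hmem
    exact (Finset.mem_erase.1 (hw c h)).1 rfl
  have p2walk : T.Walk z₁ z₂ := Walk.cons ha1 (Walk.cons ha2.symm Walk.nil)
  have p2path : (Walk.cons ha1 (Walk.cons ha2.symm Walk.nil) : T.Walk z₁ z₂).IsPath := by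
    simp [Walk.isPath_def]
    refine ⟨⟨hc1, hne⟩, fun h => hc2 h.symm⟩
  have := hT.2.path_unique w.toPath ⟨_, p2path⟩
  apply hcsupp
  rw [this]
  simp

/-- The components cover `K.erase c`. -/
lemma erase_subset_biUnion {K : Finset V} {c : V} :
    K.erase c ⊆ ((K.erase c).image (cmp T K c)).biUnion id := by
  intro x hx
  exact Finset.mem_biUnion.2 ⟨cmp T K c x, Finset.mem_image_of_mem _ hx, mem_cmp_self hx⟩

lemma comps_pairwise_disjoint {K : Finset V} {c : V} :
    ∀ D₁ ∈ (K.erase c).image (cmp T K c), ∀ D₂ ∈ (K.erase c).image (cmp T K c),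
      D₁ ≠ D₂ → Disjoint D₁ D₂ := by
  intro D₁ h1 D₂ h2 hne
  obtain ⟨x, _, rfl⟩ := Finset.mem_image.1 h1
  obtain ⟨y, _, rfl⟩ := Finset.mem_image.1 h2
  rcases cmp_eq_or_disjoint (T := T) (K := K) (c := c) (x := x) (y := y) with h | h
  · exact absurd h hne
  · exact h

lemma sum_comp_cards_le {K : Finset V} {c : V} :
    ∑ D ∈ (K.erase c).image (cmp T K c), D.card ≤ (K.erase c).card := by
  classical
  rw [← Finset.card_biUnion]
  · apply Finset.card_le_card
    intro x hx
    obtain ⟨D, hD, hxD⟩ := Finset.mem_biUnion.1 hx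
    obtain ⟨y, _, rfl⟩ := Finset.mem_image.1 hD
    exact cmp_subset hxD
  · exact fun D h1 E h2 hne => comps_pairwise_disjoint D h1 E h2 hne

lemma mass_split {K L : Finset V} {c : V} (hc : c ∈ K) :
    (K ∩ L).card ≤ ({c} ∩ L).card + ∑ D ∈ (K.erase c).image (cmp T K c), (D ∩ L).card := by
  classical
  have hsub : K ∩ L ⊆ ({c} ∩ L) ∪ (((K.erase c).image (cmp T K c)).biUnion (· ∩ L)) := by
    intro x hx
    obtain ⟨hxK, hxL⟩ := Finset.mem_inter.1 hx
    by_cases hxc : x = c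
    · subst hxc; exact Finset.mem_union_left _ (by simp [hxL])
    · refine Finset.mem_union_right _ (Finset.mem_biUnion.2 ?_)
      exact ⟨cmp T K c x, Finset.mem_image_of_mem _ (Finset.mem_erase.2 ⟨hxc, hxK⟩),
        Finset.mem_inter.2 ⟨mem_cmp_self (Finset.mem_erase.2 ⟨hxc, hxK⟩), hxL⟩⟩
  calc (K ∩ L).card ≤ _ := Finset.card_le_card hsub
    _ ≤ ({c} ∩ L).card + (((K.erase c).image (cmp T K c)).biUnion (· ∩ L)).card :=
        Finset.card_union_le _ _
    _ ≤ _ := by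
        gcongr
        exact Finset.card_biUnion_le

lemma marked_comps_card {K M : Finset V} {c : V} :
    (((K.erase c).image (cmp T K c)).filter (fun D => (M ∩ D).Nonempty)).card ≤ M.card := by
  classical
  set CompS := (K.erase c).image (cmp T K c)
  set F := CompS.filter (fun D => (M ∩ D).Nonempty) with hF
  have hdisj : ∀ D₁ ∈ F, ∀ D₂ ∈ F, D₁ ≠ D₂ → Disjoint (M ∩ D₁) (M ∩ D₂) := by
    intro D₁ h1 D₂ h2 hne
    exact Finset.disjoint_left.2 fun a ha1 ha2 =>
      (Finset.disjoint_left.1 (comps_pairwise_disjoint D₁ (Finset.mem_of_mem_filter _ h1)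
        D₂ (Finset.mem_of_mem_filter _ h2) hne)) (Finset.mem_inter.1 ha1).2
        (Finset.mem_inter.1 ha2).2
  calc F.card = ∑ D ∈ F, 1 := by simp
    _ ≤ ∑ D ∈ F, (M ∩ D).card := by
        apply Finset.sum_le_sum
        intro D hD
        exact Nat.one_le_iff_ne_zero.2 (Finset.card_ne_zero_of_mem
          (Finset.mem_filter.1 hD).2.choose_spec)
    _ = (F.biUnion (fun D => M ∩ D)).card := (Finset.card_biUnion hdisj).symm
    _ ≤ M.card := by
        apply Finset.card_le_card
        intro a ha
        obtain ⟨D, _, haD⟩ := Finset.mem_biUnion.1 ha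
        exact (Finset.mem_inter.1 haD).1

/-! ### The separator lemma -/

/-- `c` separates the (at most two) marks of `M`. -/
def Sep (T : SimpleGraph V) (K M : Finset V) (c : V) : Prop :=
  ∀ x ∈ K.erase c, (M ∩ cmp T K c x).card ≤ 1

/-- A component is relevant if it contains a mark, or there is at most one mark. -/
def Rel (M : Finset V) (D : Finset V) : Prop :=
  M.card ≤ 1 ∨ (M ∩ D).Nonempty

lemma sep_lemma (hT : T.IsTree) {K M : Finset V} (hK : ConnIn T K) (hMK : M ⊆ K)
    (hM2 : M.card ≤ 2) (hMne : M.Nonempty) :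
    ∃ c ∈ K, Sep T K M c ∧
      ∀ x ∈ K.erase c, Rel M (cmp T K c x) → 2 * (cmp T K c x).card ≤ K.card := by
  classical
  set cand := K.filter (fun c => Sep T K M c) with hcand
  obtain ⟨m₁, hm₁⟩ := hMne
  have hm₁K : m₁ ∈ K := hMK hm₁
  have hcandne : cand.Nonempty := by
    refine ⟨m₁, Finset.mem_filter.2 ⟨hm₁K, ?_⟩⟩
    intro x hx
    have hsub : M ∩ cmp T K m₁ x ⊆ M.erase m₁ := by
      intro a ha
      obtain ⟨haM, haC⟩ := Finset.mem_inter.1 ha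
      exact Finset.mem_erase.2 ⟨(Finset.mem_erase.1 (cmp_subset haC)).1, haM⟩
    calc (M ∩ cmp T K m₁ x).card ≤ (M.erase m₁).card := Finset.card_le_card hsub
      _ = M.card - 1 := Finset.card_erase_of_mem hm₁
      _ ≤ 1 := by omega
  set f : V → ℕ := fun c => (((K.erase c).image (cmp T K c)).filter (Rel M)).sup Finset.card
    with hf
  obtain ⟨c, hc_cand, hc_min⟩ := Finset.exists_min_image cand f hcandne
  have hcK : c ∈ K := (Finset.mem_filter.1 hc_cand).1
  have hcSep : Sep T K M c := (Finset.mem_filter.1 hc_cand).2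
  refine ⟨c, hcK, hcSep, ?_⟩
  by_contra hbad
  push_neg at hbad
  obtain ⟨x₀, hx₀, hx₀rel, hx₀big⟩ := hbad
  -- the largest relevant component `C`
  have hD₀mem : cmp T K c x₀ ∈ ((K.erase c).image (cmp T K c)).filter (Rel M) :=
    Finset.mem_filter.2 ⟨Finset.mem_image_of_mem _ hx₀, hx₀rel⟩
  obtain ⟨C, hCmem, hCsup⟩ := Finset.exists_mem_eq_sup _ ⟨_, hD₀mem⟩ Finset.card
  have hCrel : Rel M C := (Finset.mem_filter.1 hCmem).2
  obtain ⟨xC, hxC, hCeq⟩ := Finset.mem_image.1 (Finset.mem_of_mem_filter _ hCmem)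
  have hCbig : K.card < 2 * C.card := by
    have h1 : (cmp T K c x₀).card ≤ f c := by
      rw [hf]; exact Finset.le_sup hD₀mem
    have h2 : f c = C.card := hCsup
    omega
  have hCK : C ⊆ K := by rw [← hCeq]; exact fun a ha => Finset.mem_of_mem_erase (cmp_subset ha)
  have hCcardK : C.card ≤ K.card := Finset.card_le_card hCK
  -- the unique neighbour of `c` in `C`
  have hadjex := exists_adj_c hK hcK xC hxC
  rw [hCeq] at hadjex
  obtain ⟨z₀, hz₀C, hz₀adj⟩ := hadjex
  have huniq : ∀ a ∈ C, T.Adj a c → a = z₀ := by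
    intro a ha hadj
    rw [← hCeq] at ha hz₀C
    exact unique_adj_c hT ha hz₀C hadj hz₀adj
  have hz₀K : z₀ ∈ K.erase c := by rw [← hCeq] at hz₀C; exact cmp_subset hz₀C
  have hz₀ne : z₀ ≠ c := (Finset.mem_erase.1 hz₀K).1
  -- components w.r.t. `z₀` that start inside `C.erase z₀` stay there
  have confined : ∀ y ∈ C.erase z₀, cmp T K z₀ y ⊆ C.erase z₀ := by
    intro y hy w hw
    obtain ⟨hw1, hw2⟩ := mem_cmp.1 hw
    obtain ⟨ww, hww⟩ := hw2
    refine support_closure ww (K.erase z₀) (C.erase z₀) hww hy ?_ w ww.end_mem_support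
    intro a b ha hb hadj
    have haC : a ∈ C := Finset.mem_of_mem_erase ha
    have hbz : b ≠ z₀ := (Finset.mem_erase.1 hb).1
    by_cases hbc : b = c
    · exfalso
      exact (Finset.mem_erase.1 ha).1 (huniq a haC (hbc ▸ hadj))
    · have hbK : b ∈ K.erase c := Finset.mem_erase.2 ⟨hbc, Finset.mem_of_mem_erase hb⟩
      have : b ∈ C := by
        rw [← hCeq] at haC ⊢
        exact cmp_closure haC hbK hadj
      exact Finset.mem_erase.2 ⟨hbz, this⟩
  -- dichotomy for components of `K.erase z₀`
  have dichotomy : ∀ y ∈ K.erase z₀, cmp T K z₀ y ⊆ C.erase z₀ ∨ cmp T K z₀ y ⊆ K \ C := by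
    intro y hy
    by_cases hyC : y ∈ C.erase z₀
    · exact Or.inl (confined y hyC)
    · right
      intro w hw
      obtain ⟨hw1, _⟩ := mem_cmp.1 hw
      refine Finset.mem_sdiff.2 ⟨Finset.mem_of_mem_erase hw1, ?_⟩
      intro hwC
      have hwz : w ∈ C.erase z₀ :=
        Finset.mem_erase.2 ⟨(Finset.mem_erase.1 hw1).1, hwC⟩
      have hymem : y ∈ cmp T K z₀ w := by
        rw [cmp_eq_of_mem hw]
        exact mem_cmp_self hy
      exact hyC (confined w hwz hymem)
  -- size bound for the new components
  have hsize : ∀ y ∈ K.erase z₀, (cmp T K z₀ y).card ≤ C.card - 1 := by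
    intro y hy
    rcases dichotomy y hy with h | h
    · calc (cmp T K z₀ y).card ≤ (C.erase z₀).card := Finset.card_le_card h
        _ = C.card - 1 := Finset.card_erase_of_mem hz₀C
    · calc (cmp T K z₀ y).card ≤ (K \ C).card := Finset.card_le_card h
        _ = K.card - C.card := Finset.card_sdiff_of_subset hCK
        _ ≤ C.card - 1 := by omega
  -- `z₀` is also a valid separator
  have hz₀sep : Sep T K M z₀ := by
    intro y hy
    rcases dichotomy y hy with h | h
    · have hsub : M ∩ cmp T K z₀ y ⊆ M ∩ C := by
        intro a ha
        obtain ⟨h1, h2⟩ := Finset.mem_inter.1 ha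
        exact Finset.mem_inter.2 ⟨h1, Finset.mem_of_mem_erase (h h2)⟩
      calc (M ∩ cmp T K z₀ y).card ≤ (M ∩ C).card := Finset.card_le_card hsub
        _ ≤ 1 := by rw [← hCeq]; exact hcSep xC hxC
    · have hsub : M ∩ cmp T K z₀ y ⊆ M \ C := by
        intro a ha
        obtain ⟨h1, h2⟩ := Finset.mem_inter.1 ha
        exact Finset.mem_sdiff.2 ⟨h1, (Finset.mem_sdiff.1 (h h2)).2⟩
      have hMC : (M \ C).card ≤ 1 := by
        rcases hCrel with h1 | h1
        · calc (M \ C).card ≤ M.card := Finset.card_le_card (Finset.sdiff_subset)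
            _ ≤ 1 := h1
        · have hsplit : (M ∩ C).card + (M \ C).card = M.card := by
            rw [Finset.card_inter_add_card_sdiff]
          have h2 : 1 ≤ (M ∩ C).card := Nat.one_le_iff_ne_zero.2 (Finset.card_ne_zero_of_mem
            h1.choose_spec)
          omega
      exact le_trans (Finset.card_le_card hsub) hMC
  -- contradiction with minimality
  have hz₀cand : z₀ ∈ cand := Finset.mem_filter.2 ⟨Finset.mem_of_mem_erase hz₀K, hz₀sep⟩
  have hlt : f z₀ < f c := by
    have h1 : f z₀ ≤ C.card - 1 := by
      rw [hf]
      apply Finset.sup_le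
      intro D hD
      obtain ⟨y, hy, rfl⟩ := Finset.mem_image.1 (Finset.mem_of_mem_filter _ hD)
      exact hsize y hy
    have h2 : f c = C.card := hCsup
    have h3 : 0 < C.card := by omega
    omega
  exact absurd (hc_min z₀ hz₀cand) (by omega)

/-! ### Folding unions of lists of finsets -/

def lunion (g : List (Finset V)) : Finset V := g.foldr (· ∪ ·) ∅

lemma subset_lunion {g : List (Finset V)} {D : Finset V} (hD : D ∈ g) : D ⊆ lunion g := by
  induction g with
  | nil => simp at hD
  | cons E g ih =>
      rcases List.mem_cons.1 hD with h | h
      · subst h; exact Finset.subset_union_left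
      · exact (ih h).trans Finset.subset_union_right

lemma lunion_subset {g : List (Finset V)} {X : Finset V} (h : ∀ D ∈ g, D ⊆ X) :
    lunion g ⊆ X := by
  induction g with
  | nil => simp [lunion]
  | cons E g ih =>
      simp only [lunion, List.foldr_cons]
      exact Finset.union_subset (h E (by simp)) (ih (fun D hD => h D (by simp [hD])))

lemma card_lunion_le (g : List (Finset V)) :
    (lunion g).card ≤ (g.map Finset.card).sum := by
  induction g with
  | nil => simp [lunion]
  | cons E g ih =>
      have h1 : lunion (E :: g) = E ∪ lunion g := rfl
      rw [h1, List.map_cons, List.sum_cons]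
      exact le_trans (Finset.card_union_le _ _) (by omega)

lemma disjoint_lunion {g : List (Finset V)} {D : Finset V} (h : ∀ E ∈ g, Disjoint D E) :
    Disjoint D (lunion g) := by
  induction g with
  | nil => simp [lunion]
  | cons E g ih =>
      simp only [lunion, List.foldr_cons]
      exact Finset.disjoint_union_right.2 ⟨h E (by simp), ih (fun E' hE' => h E' (by simp [hE']))⟩

lemma sum_inter_card_le {g : List (Finset V)} (hdisj : g.Pairwise Disjoint) (L : Finset V) :
    (g.map (fun D => (D ∩ L).card)).sum ≤ ((lunion g) ∩ L).card := by
  induction g with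
  | nil => simp
  | cons E g ih =>
      simp only [List.map_cons, List.sum_cons]
      have hdisj' : Disjoint E (lunion g) := disjoint_lunion (List.pairwise_cons.1 hdisj).1
      have heq : (lunion (E :: g)) ∩ L = (E ∩ L) ∪ ((lunion g) ∩ L) := by
        simp only [lunion, List.foldr_cons]
        rw [Finset.union_inter_distrib_right]
      rw [heq, Finset.card_union_of_disjoint]
      · have := ih (List.pairwise_cons.1 hdisj).2
        omega
      · exact Finset.disjoint_of_subset_left Finset.inter_subset_left
          (Finset.disjoint_of_subset_right Finset.inter_subset_left hdisj')

/-! ### Greedy packing -/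

lemma grab {m' : ℕ} (hm' : 1 ≤ m') :
    ∀ (ls : List (Finset V)) (t : ℕ), (∀ C ∈ ls, C.card ≤ m') → ls ≠ [] →
    ∃ g r : List (Finset V), ls = g ++ r ∧ g ≠ [] ∧
      (g.map Finset.card).sum ≤ t + m' ∧ (r = [] ∨ t < (g.map Finset.card).sum) := by
  intro ls
  induction ls with
  | nil => intro t _ hne; exact absurd rfl hne
  | cons C tl ih =>
      intro t hsmall _
      by_cases hct : t < C.card
      · exact ⟨[C], tl, by simp, by simp, by
          simpa using le_trans (hsmall C (by simp)) (by omega), Or.inr (by simpa using hct)⟩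
      · push_neg at hct
        by_cases htl : tl = []
        · subst htl
          exact ⟨[C], [], by simp, by simp, by simpa using le_trans hct (by omega), Or.inl rfl⟩
        · obtain ⟨g', r', heq, hgne, hsum, hr⟩ := ih (t - C.card)
            (fun D hD => hsmall D (by simp [hD])) htl
          refine ⟨C :: g', r', by simp [heq], by simp, ?_, ?_⟩
          · simp only [List.map_cons, List.sum_cons]
            omega
          · rcases hr with h | h
            · exact Or.inl h
            · refine Or.inr ?_
              simp only [List.map_cons, List.sum_cons]
              omega

lemma pack {m' : ℕ} (hm' : 1 ≤ m') :
    ∀ (N : ℕ) (ls : List (Finset V)), ls.length ≤ N → (∀ C ∈ ls, C.card ≤ m') →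
    ∃ gs : List (List (Finset V)), gs.flatten = ls ∧ (∀ g ∈ gs, g ≠ []) ∧
      (∀ g ∈ gs, (g.map Finset.card).sum ≤ 2 * m') ∧
      m' * gs.length ≤ (ls.map Finset.card).sum + m' := by
  intro N
  induction N with
  | zero =>
      intro ls hlen _
      have : ls = [] := List.length_eq_zero_iff.1 (by omega)
      subst this
      exact ⟨[], by simp, by simp, by simp, by simp⟩
  | succ N ih =>
      intro ls hlen hsmall
      by_cases hne : ls = []
      · subst hne; exact ⟨[], by simp, by simp, by simp, by simp⟩
      · obtain ⟨g, r, heq, hgne, hsum, hr⟩ := grab hm' ls m' hsmall hne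
        have hrlen : r.length ≤ N := by
          have h1 : ls.length = g.length + r.length := by simp [heq]
          have h2 : 1 ≤ g.length := by
            cases g with
            | nil => exact absurd rfl hgne
            | cons _ _ => simp
          omega
        obtain ⟨gs', hflat, hne', hsums', hlen'⟩ := ih r hrlen
          (fun D hD => hsmall D (by simp [heq, hD]))
        refine ⟨g :: gs', by simp [hflat, heq], ?_, ?_, ?_⟩
        · intro g' hg'
          rcases List.mem_cons.1 hg' with h | h
          · subst h; exact hgne
          · exact hne' g' h
        · intro g' hg'
          rcases List.mem_cons.1 hg' with h | h
          · subst h; omega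
          · exact hsums' g' h
        · have hsplit : (ls.map Finset.card).sum =
              (g.map Finset.card).sum + (r.map Finset.card).sum := by
            simp [heq]
          rcases hr with h | h
          · subst h
            have : gs' = [] := by
              cases gs' with
              | nil => rfl
              | cons a l =>
                  exfalso
                  apply hne' a (by simp)
                  have : a ++ l.flatten = [] := by simpa using hflat
                  exact List.append_eq_nil_iff.1 this |>.1
            subst this
            simp only [List.length_cons, List.length_nil]
            omega
          · simp only [List.length_cons]
            have : m' * (gs'.length + 1) = m' * gs'.length + m' := by ring
            omega

lemma mem_lunion {g : List (Finset V)} {x : V} (hx : x ∈ lunion g) : ∃ D ∈ g, x ∈ D := by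
  induction g with
  | nil => simp [lunion] at hx
  | cons E g ih =>
      have h1 : lunion (E :: g) = E ∪ lunion g := rfl
      rw [h1] at hx
      rcases Finset.mem_union.1 hx with h | h
      · exact ⟨E, by simp, h⟩
      · obtain ⟨D, hD, hxD⟩ := ih h
        exact ⟨D, by simp [hD], hxD⟩

/-- Pigeonhole: some element of a list is at least the average. -/
lemma exists_ge_avg : ∀ (l : List ℕ), l ≠ [] → ∃ b ∈ l, l.sum ≤ l.length * b := by
  intro l
  induction l with
  | nil => intro h; exact absurd rfl h
  | cons a t ih =>
      intro _
      by_cases ht : t = []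
      · subst ht; exact ⟨a, by simp, by simp⟩
      · obtain ⟨b, hb, hsum⟩ := ih ht
        by_cases hab : a ≤ b
        · refine ⟨b, by simp [hb], ?_⟩
          simp only [List.sum_cons, List.length_cons]
          have : (t.length + 1) * b = t.length * b + b := by ring
          omega
        · refine ⟨a, by simp, ?_⟩
          simp only [List.sum_cons, List.length_cons]
          have h2 : t.length * b ≤ t.length * a := Nat.mul_le_mul_left _ (by omega)
          have : (t.length + 1) * a = t.length * a + a := by ring
          omega

/-! ### The exponent function -/

def EE (m k μ : ℕ) : ℕ := if k ≤ m then 0 else 2 * (Nat.log 2 k - Nat.log 2 m) + μ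

lemma EE_pos {m k μ : ℕ} (hk : m < k) (hμ : 1 ≤ μ) : 1 ≤ EE m k μ := by
  rw [EE, if_neg (by omega)]; omega

lemma EE_mono_mu {m k μ μ' : ℕ} (h : μ ≤ μ') : EE m k μ ≤ EE m k μ' := by
  rw [EE, EE]; split <;> omega

lemma log2_twice {d : ℕ} (hd : 1 ≤ d) : Nat.log 2 d + 1 ≤ Nat.log 2 (2 * d) := by
  have := Nat.log_mul_base (b := 2) (n := d) (by norm_num) (by omega)
  rw [mul_comm]
  omega

/-- Transition for relevant components: they have at most half the size. -/
lemma EE_transition_half {m k d μ μ' : ℕ} (hm : 1 ≤ m) (hk : m < k) (hd : 1 ≤ d)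
    (hhalf : 2 * d ≤ k) (hμ : 1 ≤ μ) (hμ' : μ' ≤ 2) :
    EE m d μ' + 1 ≤ EE m k μ := by
  have hkm : ¬ k ≤ m := by omega
  by_cases hdm : d ≤ m
  · simp only [EE, if_pos hdm, if_neg hkm]; omega
  · simp only [EE, if_neg hdm, if_neg hkm]
    have h1 : Nat.log 2 m ≤ Nat.log 2 d := Nat.log_mono_right (by omega)
    have h2 : Nat.log 2 d + 1 ≤ Nat.log 2 k :=
      le_trans (log2_twice hd) (Nat.log_mono_right hhalf)
    omega

/-- Transition for irrelevant components: two marks drop to one. -/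
lemma EE_transition_unmarked {m k d : ℕ} (hk : m < k) (hd : d ≤ k) :
    EE m d 1 + 1 ≤ EE m k 2 := by
  have hkm : ¬ k ≤ m := by omega
  by_cases hdm : d ≤ m
  · simp only [EE, if_pos hdm, if_neg hkm]; omega
  · simp only [EE, if_neg hdm, if_neg hkm]
    have h1 : Nat.log 2 m ≤ Nat.log 2 d := Nat.log_mono_right (by omega)
    have h2 : Nat.log 2 d ≤ Nat.log 2 k := Nat.log_mono_right hd
    omega

lemma log2_mul_le {a b : ℕ} (ha : 1 ≤ a) (hb : 1 ≤ b) :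
    Nat.log 2 (a * b) ≤ Nat.log 2 a + Nat.log 2 b + 1 := by
  have h1 : a < 2 ^ (Nat.log 2 a + 1) := Nat.lt_pow_succ_log_self (by norm_num) a
  have h2 : b < 2 ^ (Nat.log 2 b + 1) := Nat.lt_pow_succ_log_self (by norm_num) b
  have h3 : a * b < 2 ^ (Nat.log 2 a + Nat.log 2 b + 2) := by
    calc a * b < 2 ^ (Nat.log 2 a + 1) * 2 ^ (Nat.log 2 b + 1) := by
          exact Nat.mul_lt_mul_of_lt_of_lt h1 h2
      _ = 2 ^ (Nat.log 2 a + Nat.log 2 b + 2) := by rw [← pow_add]; ring_nf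
  have := Nat.log_lt_of_lt_pow (by positivity) h3
  omega

/-! ### The main recursive covering lemma -/

lemma main_cover (hT : T.IsTree) (L : Finset V) {m m' B : ℕ}
    (hm' : 1 ≤ m') (hmm : 2 * m' + 1 ≤ m) (hB1 : 1 ≤ B)
    (hB : Fintype.card V / m' * 2 + 4 ≤ B) :
    ∀ k : ℕ, ∀ K M : Finset V, K.card = k → ConnIn T K → K.Nonempty → M ⊆ K → M.Nonempty →
      M.card ≤ 2 → (∀ z ∈ K, ∀ y, y ∉ K → T.Adj z y → z ∈ M) →
      ∃ P A : Finset V, P ⊆ K ∧ P.Nonempty ∧ ConnIn T P ∧ P.card ≤ m ∧ A.card ≤ 2 ∧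
        (∀ z ∈ P, ∀ y, y ∉ P → T.Adj z y → z ∈ A) ∧
        (K ∩ L).card ≤ B ^ (EE m k M.card) * (P ∩ L).card := by
  classical
  intro k
  induction k using Nat.strong_induction_on with
  | _ k ih =>
  intro K M hk hKconn hKne hMK hMne hM2 hKext
  by_cases hkm : k ≤ m
  · refine ⟨K, M, subset_rfl, hKne, hKconn, hk ▸ hkm, hM2,
      fun z hz y hy hadj => hKext z hz y hy hadj, ?_⟩
    rw [EE, if_pos hkm]
    simp
  · push_neg at hkm
    have hMpos : 1 ≤ M.card := Finset.card_pos.2 hMne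
    have hEEpos : 1 ≤ EE m k M.card := EE_pos hkm hMpos
    obtain ⟨c, hcK, hcSep, hcRel⟩ := sep_lemma hT hKconn hMK hM2 hMne
    set CompS := (K.erase c).image (cmp T K c) with hCompS
    set Rset := CompS.filter (fun D => (M ∩ D).Nonempty ∨ m' < D.card) with hRset
    set Sset := CompS.filter (fun D => ¬((M ∩ D).Nonempty ∨ m' < D.card)) with hSset
    have hSsmall : ∀ C ∈ Sset.toList, C.card ≤ m' := by
      intro C hC
      rw [Finset.mem_toList] at hC
      have h2 := (Finset.mem_filter.1 hC).2
      push_neg at h2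
      exact h2.2
    obtain ⟨gs, hflat, hgne, hgsums, hgslen⟩ :=
      pack hm' Sset.toList.length Sset.toList le_rfl hSsmall
    have hgmem : ∀ g ∈ gs, ∀ D ∈ g, D ∈ Sset := by
      intro g hg D hD
      have : D ∈ gs.flatten := List.mem_flatten.2 ⟨g, hg, hD⟩
      rw [hflat, Finset.mem_toList] at this
      exact this
    -- mass accounting
    have hmass1 : (K ∩ L).card ≤ ({c} ∩ L).card + ∑ D ∈ CompS, (D ∩ L).card := mass_split hcK
    have hmass2 : ∑ D ∈ CompS, (D ∩ L).card
        = ∑ D ∈ Rset, (D ∩ L).card + ∑ D ∈ Sset, (D ∩ L).card :=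
      (Finset.sum_filter_add_sum_filter_not CompS _ _).symm
    have hmass3 : ∑ D ∈ Sset, (D ∩ L).card
        ≤ (gs.map (fun g => ((insert c (lunion g)) ∩ L).card)).sum := by
      have e1 : ∑ D ∈ Sset, (D ∩ L).card
          = (Sset.toList.map (fun D => (D ∩ L).card)).sum :=
        (Finset.sum_map_toList _ _).symm
      rw [e1, ← hflat, List.map_flatten, List.sum_flatten, List.map_map]
      apply List.sum_le_sum
      intro g hg
      simp only [Function.comp_apply]
      have hpd : g.Pairwise (fun D E => Disjoint D E) := by
        have hnd : g.Nodup := by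
          have hsub : g.Sublist gs.flatten := List.sublist_flatten_of_mem hg
          exact hsub.nodup (hflat ▸ Finset.nodup_toList Sset)
        refine hnd.imp_of_mem ?_
        intro D E hD hE hne
        exact comps_pairwise_disjoint D (Finset.mem_of_mem_filter _ (hgmem g hg D hD))
          E (Finset.mem_of_mem_filter _ (hgmem g hg E hE)) hne
      calc (g.map (fun D => (D ∩ L).card)).sum ≤ ((lunion g) ∩ L).card :=
            sum_inter_card_le hpd L
        _ ≤ ((insert c (lunion g)) ∩ L).card := by
            apply Finset.card_le_card
            exact Finset.inter_subset_inter (Finset.subset_insert _ _) subset_rfl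
    set ms : List ℕ := ({c} ∩ L).card ::
      (Rset.toList.map (fun D => (D ∩ L).card)
        ++ gs.map (fun g => ((insert c (lunion g)) ∩ L).card)) with hms
    have hmssum : (K ∩ L).card ≤ ms.sum := by
      rw [hms]
      simp only [List.sum_cons, List.sum_append]
      have e2 : (Rset.toList.map (fun D => (D ∩ L).card)).sum = ∑ D ∈ Rset, (D ∩ L).card :=
        Finset.sum_map_toList _ _
      omega
    -- counting the branches
    have hcard_erase : (K.erase c).card = k - 1 := by rw [Finset.card_erase_of_mem hcK, hk]
    have hsumcards : ∑ D ∈ CompS, D.card ≤ k - 1 := hcard_erase ▸ sum_comp_cards_le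
    have hmslen : ms.length ≤ B := by
      have hR : Rset.card ≤ 2 + (k - 1) / (m' + 1) := by
        have hsplit : Rset ⊆ CompS.filter (fun D => (M ∩ D).Nonempty)
            ∪ CompS.filter (fun D => m' < D.card) := by
          rw [hRset, ← Finset.filter_or]
        have h1 : (CompS.filter (fun D => (M ∩ D).Nonempty)).card ≤ 2 :=
          le_trans marked_comps_card hM2
        have h2 : (CompS.filter (fun D => m' < D.card)).card ≤ (k - 1) / (m' + 1) := by
          rw [Nat.le_div_iff_mul_le (by omega)]
          calc (CompS.filter (fun D => m' < D.card)).card * (m' + 1)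
              ≤ ∑ D ∈ CompS.filter (fun D => m' < D.card), D.card := by
                rw [← smul_eq_mul]
                apply Finset.card_nsmul_le_sum
                intro D hD
                exact (Finset.mem_filter.1 hD).2
            _ ≤ ∑ D ∈ CompS, D.card :=
                Finset.sum_le_sum_of_subset (Finset.filter_subset _ _)
            _ ≤ k - 1 := hsumcards
        calc Rset.card ≤ _ := Finset.card_le_card hsplit
          _ ≤ _ := Finset.card_union_le _ _
          _ ≤ 2 + (k - 1) / (m' + 1) := by omega
      have hG : gs.length ≤ (k - 1) / m' + 1 := by
        have h1 : (Sset.toList.map Finset.card).sum = ∑ D ∈ Sset, D.card :=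
          Finset.sum_map_toList _ _
        have h2 : ∑ D ∈ Sset, D.card ≤ k - 1 :=
          le_trans (Finset.sum_le_sum_of_subset (Finset.filter_subset _ _)) hsumcards
        have h3 : m' * gs.length ≤ (k - 1) + m' := by omega
        have h4 : gs.length ≤ ((k - 1) + m') / m' := by
          rw [Nat.le_div_iff_mul_le (by omega), Nat.mul_comm]
          omega
        rwa [Nat.add_div_right _ (by omega)] at h4
      have hlen : ms.length = 1 + Rset.card + gs.length := by
        rw [hms]
        simp [Finset.length_toList]
        omega
      have hd1 : (k - 1) / (m' + 1) ≤ (k - 1) / m' := Nat.div_le_div_left (by omega) (by omega)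
      have hd2 : (k - 1) / m' ≤ Fintype.card V / m' := by
        apply Nat.div_le_div_right
        have : K.card ≤ Fintype.card V := Finset.card_le_univ K
        omega
      omega
    obtain ⟨b, hbmem, hbavg⟩ := exists_ge_avg ms (by simp [hms])
    have hKb : (K ∩ L).card ≤ B * b := by
      calc (K ∩ L).card ≤ ms.sum := hmssum
        _ ≤ ms.length * b := hbavg
        _ ≤ B * b := Nat.mul_le_mul_right _ hmslen
    have hpow1 : B ^ 1 ≤ B ^ (EE m k M.card) := Nat.pow_le_pow_right hB1 hEEpos
    rcases List.mem_cons.1 hbmem with hbc | hbmem'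
    · -- the singleton {c} is a rich enough piece
      refine ⟨{c}, {c}, Finset.singleton_subset_iff.2 hcK, ⟨c, by simp⟩, ?_, ?_, by simp, ?_, ?_⟩
      · intro x hx y hy
        rw [Finset.mem_singleton] at hx hy
        subst hx; subst hy
        exact RIn.refl (by simp)
      · simp; omega
      · intro z hz y hy hadj
        exact hz
      · calc (K ∩ L).card ≤ B * b := hKb
          _ = B ^ 1 * ({c} ∩ L).card := by rw [hbc]; ring
          _ ≤ B ^ (EE m k M.card) * ({c} ∩ L).card := Nat.mul_le_mul_right _ hpow1
    rcases List.mem_append.1 hbmem' with hbR | hbG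
    · -- a recursive component is rich
      obtain ⟨D, hDlist, hbeq⟩ := List.mem_map.1 hbR
      rw [Finset.mem_toList] at hDlist
      have hDC : D ∈ CompS := Finset.mem_of_mem_filter _ hDlist
      obtain ⟨x₀, hx₀, hDeq⟩ := Finset.mem_image.1 hDC
      set E := cmp T K c x₀ with hE
      obtain ⟨z₀, hz₀D, hz₀adj⟩ := exists_adj_c hKconn hcK x₀ hx₀
      have hEsub : E ⊆ K.erase c := cmp_subset
      have hEsubK : E ⊆ K := hEsub.trans (Finset.erase_subset _ _)
      have hEcard : E.card < k := by
        have := Finset.card_le_card hEsub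
        omega
      have hEne : E.Nonempty := cmp_nonempty hx₀
      set M' := insert z₀ (M ∩ E) with hM'
      have hM'sub : M' ⊆ E := by
        rw [hM']
        exact Finset.insert_subset hz₀D Finset.inter_subset_right
      have hM'ne : M'.Nonempty := ⟨z₀, Finset.mem_insert_self _ _⟩
      have hM'card : M'.card ≤ 2 := by
        have h := hcSep x₀ hx₀
        rw [← hE] at h
        calc M'.card ≤ (M ∩ E).card + 1 := Finset.card_insert_le _ _
          _ ≤ 2 := by omega
      have hEext : ∀ z ∈ E, ∀ y, y ∉ E → T.Adj z y → z ∈ M' := by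
        intro z hz y hy hadj
        by_cases hyK : y ∈ K
        · by_cases hyc : y = c
          · subst hyc
            have : z = z₀ := unique_adj_c hT hz hz₀D hadj hz₀adj
            rw [this]
            exact Finset.mem_insert_self _ _
          · exact absurd (cmp_closure hz (Finset.mem_erase.2 ⟨hyc, hyK⟩) hadj) hy
        · have : z ∈ M := hKext z (hEsubK hz) y hyK hadj
          exact Finset.mem_insert_of_mem (Finset.mem_inter.2 ⟨this, hz⟩)
      obtain ⟨P, A, hPE, hPne, hPconn, hPcard, hAcard, hPext, hPmass⟩ :=
        ih E.card hEcard E M' rfl connIn_cmp hEne hM'sub hM'ne hM'card hEext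
      have htrans : EE m E.card M'.card + 1 ≤ EE m k M.card := by
        by_cases hrel : Rel M E
        · have hhalf : 2 * E.card ≤ k := by
            rw [hE] at hrel
            have h2 := hcRel x₀ hx₀ hrel
            rw [← hE] at h2
            omega
          exact EE_transition_half (by omega) hkm (Finset.card_pos.2 hEne) hhalf hMpos hM'card
        · rw [Rel] at hrel
          push_neg at hrel
          obtain ⟨hM1, hMEempty⟩ := hrel
          have hM'1 : M'.card = 1 := by
            rw [hM', hMEempty]
            simp
          have hMc2 : M.card = 2 := by omega
          rw [hM'1, hMc2]
          exact EE_transition_unmarked hkm (by omega)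
      refine ⟨P, A, hPE.trans hEsubK, hPne, hPconn, hPcard, hAcard, hPext, ?_⟩
      calc (K ∩ L).card ≤ B * b := hKb
        _ = B * (E ∩ L).card := by rw [← hbeq, hDeq]
        _ ≤ B * (B ^ (EE m E.card M'.card) * (P ∩ L).card) := Nat.mul_le_mul_left _ hPmass
        _ = B ^ (EE m E.card M'.card + 1) * (P ∩ L).card := by ring
        _ ≤ B ^ (EE m k M.card) * (P ∩ L).card :=
            Nat.mul_le_mul_right _ (Nat.pow_le_pow_right hB1 htrans)
    · -- a bundle is rich
      obtain ⟨g, hg, hbeq⟩ := List.mem_map.1 hbG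
      set P := insert c (lunion g) with hP
      have hgS : ∀ D ∈ g, D ∈ Sset := hgmem g hg
      have hlK : lunion g ⊆ K.erase c := by
        apply lunion_subset
        intro D hD
        have hDC : D ∈ CompS := Finset.mem_of_mem_filter _ (hgS D hD)
        obtain ⟨x', hx', hDeq⟩ := Finset.mem_image.1 hDC
        rw [← hDeq]
        exact cmp_subset
      have hPK : P ⊆ K := by
        rw [hP]
        exact Finset.insert_subset hcK (hlK.trans (Finset.erase_subset _ _))
      have hPcard : P.card ≤ m := by
        calc P.card ≤ (lunion g).card + 1 := Finset.card_insert_le _ _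
          _ ≤ (g.map Finset.card).sum + 1 := by
              have := card_lunion_le g
              omega
          _ ≤ 2 * m' + 1 := by
              have := hgsums g hg
              omega
          _ ≤ m := hmm
      have hPc : ∀ x ∈ P, RIn T P x c := by
        intro x hx
        rcases Finset.mem_insert.1 hx with rfl | hx'
        · exact RIn.refl (Finset.mem_insert_self _ _)
        · obtain ⟨D, hDg, hxD⟩ := mem_lunion hx'
          have hDC : D ∈ CompS := Finset.mem_of_mem_filter _ (hgS D hDg)
          obtain ⟨x', hx', hDeq⟩ := Finset.mem_image.1 hDC
          obtain ⟨z, hzD, hzadj⟩ := exists_adj_c hKconn hcK x' hx'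
          have hDP : D ⊆ P := (subset_lunion hDg).trans (Finset.subset_insert _ _)
          have h1 : RIn T (cmp T K c x') x z := by
            apply connIn_cmp
            · rw [← hDeq] at hxD; exact hxD
            · exact hzD
          have h2 : RIn T P x z := h1.mono (by rw [hDeq]; exact hDP)
          exact h2.trans (RIn.adj (hDP (hDeq ▸ hzD)) (Finset.mem_insert_self _ _) hzadj)
      have hPconn : ConnIn T P := by
        intro x hx y hy
        exact (hPc x hx).trans (hPc y hy).symm
      have hPext : ∀ z ∈ P, ∀ y, y ∉ P → T.Adj z y → z ∈ ({c} : Finset V) := by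
        intro z hz y hy hadj
        rcases Finset.mem_insert.1 hz with rfl | hz'
        · exact Finset.mem_singleton_self _
        · exfalso
          obtain ⟨D, hDg, hzD⟩ := mem_lunion hz'
          have hDS : D ∈ Sset := hgS D hDg
          have hDC : D ∈ CompS := Finset.mem_of_mem_filter _ hDS
          obtain ⟨x', hx', hDeq⟩ := Finset.mem_image.1 hDC
          have hDP : D ⊆ P := (subset_lunion hDg).trans (Finset.subset_insert _ _)
          by_cases hyK : y ∈ K
          · by_cases hyc : y = c
            · subst hyc
              exact hy (Finset.mem_insert_self _ _)
            · have : y ∈ D := by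
                rw [← hDeq]
                exact cmp_closure (hDeq ▸ hzD) (Finset.mem_erase.2 ⟨hyc, hyK⟩) hadj
              exact hy (hDP this)
          · have hzM : z ∈ M := hKext z (hPK hz) y hyK hadj
            have hfact := (Finset.mem_filter.1 hDS).2
            push_neg at hfact
            exact (Finset.not_nonempty_iff_eq_empty.2 hfact.1) ⟨z, Finset.mem_inter.2 ⟨hzM, hzD⟩⟩
      refine ⟨P, {c}, hPK, ⟨c, Finset.mem_insert_self _ _⟩, hPconn, hPcard, by simp, hPext, ?_⟩
      calc (K ∩ L).card ≤ B * b := hKb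
        _ = B ^ 1 * (P ∩ L).card := by rw [← hbeq]; ring
        _ ≤ B ^ (EE m k M.card) * (P ∩ L).card := Nat.mul_le_mul_right _ hpow1

/-! ### Assembling `T₁` and `T₂` -/

/-- There is a path to `u` meeting `P` only in `u`. -/
def Wside (T : SimpleGraph V) (P : Finset V) (u x : V) : Prop :=
  ∃ w : T.Walk x u, w.IsPath ∧ ∀ z ∈ w.support, z ∈ P → z = u

lemma endpoint_not_mem_takeUntil {x v z : V} (p : T.Walk x v) (hp : p.IsPath)
    (hz : z ∈ p.support) (hzv : z ≠ v) : v ∉ (p.takeUntil z hz).support := by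
  intro hmem
  have hspec := p.take_spec hz
  have hnodup : p.support.Nodup := hp.support_nodup
  rw [← hspec, Walk.support_append] at hnodup
  rw [List.nodup_append] at hnodup
  apply hnodup.2.2 v hmem v ?_ rfl
  have hvdrop : v ∈ (p.dropUntil z hz).support := Walk.end_mem_support _
  rw [Walk.support_eq_cons] at hvdrop
  rcases List.mem_cons.1 hvdrop with h | h
  · exact absurd h.symm hzv
  · exact h

lemma assemble (hconn : T.Connected) {P : Finset V} {u v : V}
    (hu : u ∈ P) (hv : v ∈ P) (huv : u ≠ v)
    (hext : ∀ z ∈ P, ∀ y, y ∉ P → T.Adj z y → z = u ∨ z = v) :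
    ∃ T₁ T₂ : Finset V, T₁.Nonempty ∧ T₂.Nonempty ∧ ConnIn T T₁ ∧ ConnIn T T₂ ∧
      P ∪ T₁ ∪ T₂ = Finset.univ ∧ Disjoint T₁ T₂ ∧ T₁ ∩ P = {u} ∧ T₂ ∩ P = {v} := by
  classical
  -- the dichotomy
  have key : ∀ (N : ℕ) (x : V) (w : T.Walk x u), w.length ≤ N → x ∉ P →
      Wside T P u x ∨ Wside T P v x := by
    intro N
    induction N with
    | zero =>
        intro x w hlen hx
        cases w with
        | nil => exact absurd hu hx
        | cons h w => simp at hlen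
    | succ N ih =>
        intro x w hlen hx
        cases w with
        | nil => exact absurd hu hx
        | @cons _ b _ hadj w' =>
            by_cases hbP : b ∈ P
            · rcases hext b hbP x hx hadj.symm with hb | hb
              · left
                subst hb
                refine ⟨Walk.cons hadj Walk.nil, ?_, ?_⟩
                · simp [Walk.isPath_def]
                  intro h; subst h; exact hx hu
                · intro z hz hzP
                  simp [Walk.support_cons] at hz
                  rcases hz with rfl | rfl
                  · exact absurd hzP hx
                  · rfl
              · right
                subst hb
                refine ⟨Walk.cons hadj Walk.nil, ?_, ?_⟩
                · simp [Walk.isPath_def]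
                  intro h; subst h; exact hx hv
                · intro z hz hzP
                  simp [Walk.support_cons] at hz
                  rcases hz with rfl | rfl
                  · exact absurd hzP hx
                  · rfl
            · have hlen' : w'.length ≤ N := by
                have : w'.length + 1 ≤ N + 1 := by simpa using hlen
                omega
              rcases ih b w' hlen' hbP with ⟨p, hpath, hprop⟩ | ⟨p, hpath, hprop⟩
              · left
                refine ⟨(Walk.cons hadj p).toPath, (Walk.cons hadj p).toPath.2, ?_⟩
                intro z hz hzP
                have hz2 : z ∈ (Walk.cons hadj p).support :=
                  Walk.support_toPath_subset _ hz
                rw [Walk.support_cons] at hz2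
                rcases List.mem_cons.1 hz2 with rfl | hz3
                · exact absurd hzP hx
                · exact hprop z hz3 hzP
              · right
                refine ⟨(Walk.cons hadj p).toPath, (Walk.cons hadj p).toPath.2, ?_⟩
                intro z hz hzP
                have hz2 : z ∈ (Walk.cons hadj p).support :=
                  Walk.support_toPath_subset _ hz
                rw [Walk.support_cons] at hz2
                rcases List.mem_cons.1 hz2 with rfl | hz3
                · exact absurd hzP hx
                · exact hprop z hz3 hzP
  have dich : ∀ x, x ∉ P → Wside T P u x ∨ Wside T P v x := by
    intro x hx
    obtain ⟨w⟩ := hconn.preconnected x u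
    exact key w.length x w le_rfl hx
  set T₁ : Finset V := insert u (Finset.univ.filter (fun x => x ∉ P ∧ Wside T P u x)) with hT₁
  set T₂ : Finset V := insert v (Finset.univ.filter (fun x => x ∉ P ∧ ¬ Wside T P u x)) with hT₂
  have hmemT₁ : ∀ x, x ∈ T₁ ↔ x = u ∨ (x ∉ P ∧ Wside T P u x) := by
    intro x; rw [hT₁]; simp
  have hmemT₂ : ∀ x, x ∈ T₂ ↔ x = v ∨ (x ∉ P ∧ ¬ Wside T P u x) := by
    intro x; rw [hT₂]; simp
  refine ⟨T₁, T₂, ⟨u, (hmemT₁ u).2 (Or.inl rfl)⟩, ⟨v, (hmemT₂ v).2 (Or.inl rfl)⟩, ?_, ?_, ?_, ?_, ?_, ?_⟩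
  · -- ConnIn T₁
    have hto : ∀ x ∈ T₁, RIn T T₁ x u := by
      intro x hx
      rcases (hmemT₁ x).1 hx with hxu | ⟨hxP, p, hpath, hprop⟩
      · rw [hxu]
        exact RIn.refl ((hmemT₁ u).2 (Or.inl rfl))
      · refine ⟨p, ?_⟩
        intro z hz
        by_cases hzP : z ∈ P
        · rw [hprop z hz hzP]
          exact (hmemT₁ u).2 (Or.inl rfl)
        · refine (hmemT₁ z).2 (Or.inr ⟨hzP, p.dropUntil z hz, hpath.dropUntil hz, ?_⟩)
          intro z' hz' hz'P
          exact hprop z' (Walk.support_dropUntil_subset p hz hz') hz'P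
    intro x hx y hy
    exact (hto x hx).trans (hto y hy).symm
  · -- ConnIn T₂
    have hto : ∀ x ∈ T₂, RIn T T₂ x v := by
      intro x hx
      rcases (hmemT₂ x).1 hx with hxv | ⟨hxP, hxnW⟩
      · rw [hxv]
        exact RIn.refl ((hmemT₂ v).2 (Or.inl rfl))
      · obtain ⟨p, hpath, hprop⟩ := (dich x hxP).resolve_left hxnW
        refine ⟨p, ?_⟩
        intro z hz
        by_cases hzP : z ∈ P
        · rw [hprop z hz hzP]
          exact (hmemT₂ v).2 (Or.inl rfl)
        · refine (hmemT₂ z).2 (Or.inr ⟨hzP, ?_⟩)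
          -- no clean path from z to u: otherwise x would have one
          rintro ⟨q, hqpath, hqprop⟩
          apply hxnW
          have hzv : z ≠ v := fun h => hzP (h ▸ hv)
          have hvnot : v ∉ (p.takeUntil z hz).support :=
            endpoint_not_mem_takeUntil p hpath hz hzv
          set w3 := (p.takeUntil z hz).append q with hw3
          refine ⟨w3.toPath, w3.toPath.2, ?_⟩
          intro z' hz' hz'P
          have : z' ∈ w3.support := Walk.support_toPath_subset _ hz'
          rw [hw3, Walk.support_append] at this
          rcases List.mem_append.1 this with h | h
          · exfalso
            have := hprop z' (Walk.support_takeUntil_subset p hz h) hz'P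
            subst this
            exact hvnot h
          · exact hqprop z' (List.mem_of_mem_tail h) hz'P
    intro x hx y hy
    exact (hto x hx).trans (hto y hy).symm
  · -- covering
    apply Finset.eq_univ_of_forall
    intro x
    by_cases hxP : x ∈ P
    · exact Finset.mem_union_left _ (Finset.mem_union_left _ hxP)
    · by_cases hxW : Wside T P u x
      · exact Finset.mem_union_left _ (Finset.mem_union_right _ ((hmemT₁ x).2
          (Or.inr ⟨hxP, hxW⟩)))
      · exact Finset.mem_union_right _ ((hmemT₂ x).2 (Or.inr ⟨hxP, hxW⟩))
  · -- disjoint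
    rw [Finset.disjoint_left]
    intro x hx1 hx2
    rcases (hmemT₁ x).1 hx1 with hxu | ⟨hxP, hxW⟩
    · rcases (hmemT₂ x).1 hx2 with h | ⟨hxP, _⟩
      · exact huv (hxu ▸ h)
      · exact hxP (hxu ▸ hu)
    · rcases (hmemT₂ x).1 hx2 with hxv | ⟨_, hxnW⟩
      · exact hxP (hxv ▸ hv)
      · exact hxnW hxW
  · -- T₁ ∩ P = {u}
    ext z
    simp only [Finset.mem_inter, Finset.mem_singleton]
    constructor
    · rintro ⟨hz1, hz2⟩
      rcases (hmemT₁ z).1 hz1 with hzu | ⟨hzP, _⟩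
      · exact hzu
      · exact absurd hz2 hzP
    · intro hz
      rw [hz]
      exact ⟨(hmemT₁ u).2 (Or.inl rfl), hu⟩
  · -- T₂ ∩ P = {v}
    ext z
    simp only [Finset.mem_inter, Finset.mem_singleton]
    constructor
    · rintro ⟨hz1, hz2⟩
      rcases (hmemT₂ z).1 hz1 with hzv | ⟨hzP, _⟩
      · exact hzv
      · exact absurd hz2 hzP
    · intro hz
      rw [hz]
      exact ⟨(hmemT₂ v).2 (Or.inl rfl), hv⟩

/-! ### Refining a piece into a usable `S` -/

lemma exists_neighbor (hconn : T.Connected) (h2 : 2 ≤ Fintype.card V) (x : V) :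
    ∃ y, T.Adj x y := by
  obtain ⟨z, hz⟩ := Fintype.exists_ne_of_one_lt_card (by omega) x
  obtain ⟨w⟩ := hconn.preconnected x z
  cases w with
  | nil => exact absurd rfl hz
  | @cons _ b _ hadj w' => exact ⟨b, hadj⟩

lemma connIn_pair {x y : V} (hadj : T.Adj x y) : ConnIn T ({x, y} : Finset V) := by
  have hx : x ∈ ({x, y} : Finset V) := by simp
  have hy : y ∈ ({x, y} : Finset V) := by simp
  intro a ha b hb
  have ha' : a = x ∨ a = y := by simpa using ha
  have hb' : b = x ∨ b = y := by simpa using hb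
  rcases ha' with h1 | h1 <;> rcases hb' with h2 | h2 <;> rw [h1, h2]
  exacts [RIn.refl hx, RIn.adj hx hy hadj, RIn.adj hy hx hadj.symm, RIn.refl hy]

lemma refine_piece (hconn : T.Connected) (h2 : 2 ≤ Fintype.card V) {P A : Finset V} {m : ℕ}
    (hPne : P.Nonempty) (hPconn : ConnIn T P) (hPm : P.card ≤ m) (hm2 : 2 ≤ m)
    (hA : A.card ≤ 2) (hext : ∀ z ∈ P, ∀ y, y ∉ P → T.Adj z y → z ∈ A) :
    ∃ S u v, S.Nonempty ∧ ConnIn T S ∧ S.card ≤ m ∧ P ⊆ S ∧ u ∈ S ∧ v ∈ S ∧ u ≠ v ∧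
      (∀ z ∈ S, ∀ y, y ∉ S → T.Adj z y → z = u ∨ z = v) := by
  classical
  by_cases hP2 : 2 ≤ P.card
  · -- use P itself
    have hA'c : (A ∩ P).card ≤ 2 :=
      le_trans (Finset.card_le_card Finset.inter_subset_left) hA
    obtain ⟨Bs, hABs, hBsP, hBscard⟩ :=
      Finset.exists_subsuperset_card_eq (Finset.inter_subset_right : A ∩ P ⊆ P) hA'c hP2
    obtain ⟨u, v, huv, hBs⟩ := Finset.card_eq_two.1 hBscard
    subst hBs
    refine ⟨P, u, v, hPne, hPconn, hPm, subset_rfl, hBsP (by simp), hBsP (by simp), huv, ?_⟩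
    intro z hz y hy hadj
    have : z ∈ A ∩ P := Finset.mem_inter.2 ⟨hext z hz y hy hadj, hz⟩
    have := hABs this
    simpa using this
  · -- P is a single vertex: extend it by an edge
    obtain ⟨x, hx⟩ := hPne
    have hPx : P = {x} := by
      have h1 : P.card = 1 := by
        have := Finset.card_pos.2 ⟨x, hx⟩
        omega
      obtain ⟨a, ha⟩ := Finset.card_eq_one.1 h1
      rw [ha] at hx ⊢
      rw [Finset.mem_singleton] at hx
      rw [hx]
    obtain ⟨y, hadj⟩ := exists_neighbor hconn h2 x
    refine ⟨{x, y}, x, y, ⟨x, by simp⟩, connIn_pair hadj, ?_, ?_, by simp, by simp,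
      hadj.ne, ?_⟩
    · have : ({x, y} : Finset V).card ≤ 2 := Finset.card_insert_le _ _ |>.trans (by simp)
      omega
    · rw [hPx]
      intro a ha
      rw [Finset.mem_singleton] at ha
      rw [ha]
      simp
    · intro z hz y' hy' hadj'
      simpa using Finset.mem_insert.1 hz

end Stmt10


/-- `W` spans a subtree of the tree `T`: the induced subgraph on `W` is nonempty and
connected (hence, inside a tree, it is a subtree). -/
def IsSubtree {V : Type*} (T : SimpleGraph V) (W : Finset V) : Prop :=
  W.Nonempty ∧ (T.induce (↑W : Set V)).Connected

/-- For any `ε > 0` there are `β > 0` and `n₀` such that any tree `T` on `n ≥ n₀` vertices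
and any `L ⊆ V(T)` admit subtrees `S, T₁, T₂` covering `T` with `|S| ≤ εn`, `S` containing
at least `β|L|` vertices of `L`, and `T₁, T₂` disjoint, each meeting `S` in one vertex. -/
theorem stmt10 (ε : ℝ) (hε : 0 < ε) :
    ∃ (β : ℝ) (n₀ : ℕ), 0 < β ∧
      ∀ n : ℕ, n₀ ≤ n → ∀ T : SimpleGraph (Fin n), T.IsTree → ∀ L : Finset (Fin n),
        ∃ S T₁ T₂ : Finset (Fin n),
          IsSubtree T S ∧ IsSubtree T T₁ ∧ IsSubtree T T₂ ∧
          S ∪ T₁ ∪ T₂ = Finset.univ ∧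
          (S.card : ℝ) ≤ ε * n ∧
          β * L.card ≤ ((S ∩ L).card : ℝ) ∧
          Disjoint T₁ T₂ ∧ (T₁ ∩ S).card = 1 ∧ (T₂ ∩ S).card = 1 := by
  classical
  set ε' : ℝ := min ε (1/4) with hε'def
  have hε'pos : 0 < ε' := lt_min hε (by norm_num)
  have hε'le : ε' ≤ ε := min_le_left _ _
  have hε'q : ε' ≤ 1/4 := min_le_right _ _
  set c₁ : ℕ := ⌈(12:ℝ)/ε'⌉₊ with hc₁def
  set c₂ : ℕ := ⌈(2:ℝ)/ε'⌉₊ with hc₂def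
  set B : ℕ := 2 * c₁ + 4 with hBdef
  set Dcap : ℕ := 2 * (Nat.log 2 c₂ + 1) + 1 with hDdef
  have hBpos : (0:ℝ) < (B:ℝ) := by
    have : 0 < B := by omega
    exact_mod_cast this
  have hBpow : (0:ℝ) < (B:ℝ) ^ Dcap := pow_pos hBpos _
  refine ⟨((B:ℝ) ^ Dcap)⁻¹, ⌈(16:ℝ)/ε'⌉₊ + 2, inv_pos.2 hBpow, ?_⟩
  intro n hn T hT L
  have hceil : (⌈(16:ℝ)/ε'⌉₊ : ℕ) ≤ n := by omega
  have hn16 : (16:ℝ)/ε' ≤ n := le_trans (Nat.le_ceil _) (by exact_mod_cast hceil)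
  have hnpos : 0 < n := by omega
  have hnR : (0:ℝ) < n := by exact_mod_cast hnpos
  have hε'n : (16:ℝ) ≤ ε' * n := by
    rw [div_le_iff₀ hε'pos] at hn16
    linarith
  set m : ℕ := ⌊ε' * n⌋₊ with hmdef
  have hm_le : (m:ℝ) ≤ ε' * n := Nat.floor_le (by positivity)
  have hm_gt : ε' * n - 1 < m := by
    have := Nat.lt_floor_add_one (ε' * n)
    rw [← hmdef] at this
    linarith
  have hm15 : 15 ≤ m := by
    have h1 : (15:ℝ) ≤ (m:ℝ) := by linarith
    exact_mod_cast h1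
  set m' : ℕ := m / 3 with hm'def
  have hm'1 : 1 ≤ m' := by omega
  have hmm : 2 * m' + 1 ≤ m := by omega
  have hm'real : (m:ℝ) ≤ 3 * (m':ℝ) + 2 := by
    have h : m ≤ 3 * m' + 2 := by omega
    exact_mod_cast h
  have hc₁ge : (12:ℝ)/ε' ≤ (c₁:ℝ) := Nat.le_ceil _
  have hc₂ge : (2:ℝ)/ε' ≤ (c₂:ℝ) := Nat.le_ceil _
  have hnm' : n ≤ c₁ * m' := by
    have h1 : (n:ℝ) ≤ (c₁:ℝ) * (m':ℝ) := by
      have hm'low : (ε' * n - 3) / 3 ≤ (m':ℝ) := by linarith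
      have hge0 : (0:ℝ) ≤ (ε' * n - 3)/3 := by linarith
      have h2 : (12/ε') * ((ε' * n - 3)/3) ≤ (c₁:ℝ) * (m':ℝ) :=
        mul_le_mul hc₁ge hm'low hge0 (le_trans (by positivity) hc₁ge)
      have h3 : (12/ε') * ((ε' * n - 3)/3) = 4 * n - 12/ε' := by
        field_simp
        ring
      rw [h3] at h2
      have h4 : (12:ℝ)/ε' ≤ 16/ε' := by gcongr <;> norm_num
      linarith
    exact_mod_cast h1
  have hBbound : Fintype.card (Fin n) / m' * 2 + 4 ≤ B := by
    rw [Fintype.card_fin]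
    have h1 : n / m' ≤ c₁ := by
      calc n / m' ≤ (c₁ * m') / m' := Nat.div_le_div_right hnm'
        _ = c₁ := Nat.mul_div_cancel c₁ (by omega)
    omega
  have hnmc₂ : n ≤ m * c₂ := by
    have h1 : (n:ℝ) ≤ (m:ℝ) * c₂ := by
      have h2 : (ε' * n - 1) * (2/ε') ≤ (m:ℝ) * c₂ := by
        apply mul_le_mul hm_gt.le hc₂ge (by positivity) ?_
        have : (0:ℝ) ≤ (m:ℝ) := by positivity
        exact this
      have h3 : (ε' * n - 1) * (2/ε') = 2 * n - 2/ε' := by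
        field_simp
      rw [h3] at h2
      have h4 : (2:ℝ)/ε' ≤ 16/ε' := by gcongr <;> norm_num
      linarith
    exact_mod_cast h1
  have hc₂1 : 1 ≤ c₂ := by
    have h0 : (1:ℝ) ≤ (2:ℝ)/ε' := by
      rw [le_div_iff₀ hε'pos]
      linarith
    have : (1:ℝ) ≤ (c₂:ℝ) := le_trans h0 hc₂ge
    exact_mod_cast this
  have hEEcap : Stmt10.EE m n 1 ≤ Dcap := by
    by_cases hnm : n ≤ m
    · rw [Stmt10.EE, if_pos hnm]
      omega
    · rw [Stmt10.EE, if_neg hnm]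
      have h1 : Nat.log 2 n ≤ Nat.log 2 (m * c₂) := Nat.log_mono_right hnmc₂
      have h2 : Nat.log 2 (m * c₂) ≤ Nat.log 2 m + Nat.log 2 c₂ + 1 :=
        Stmt10.log2_mul_le (by omega) hc₂1
      omega
  -- apply the covering machinery
  have hconnUniv : Stmt10.ConnIn T Finset.univ := Stmt10.connIn_univ hT.1
  set r : Fin n := ⟨0, hnpos⟩ with hrdef
  obtain ⟨P, A, hPsub, hPne, hPconn, hPcard, hAcard, hPext, hPmass⟩ :=
    Stmt10.main_cover hT L hm'1 hmm (by omega) hBbound n Finset.univ {r}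
      (by rw [Finset.card_univ, Fintype.card_fin]) hconnUniv ⟨r, Finset.mem_univ r⟩
      (Finset.subset_univ _) ⟨r, Finset.mem_singleton_self r⟩ (by simp)
      (fun z hz y hy => absurd (Finset.mem_univ y) hy)
  obtain ⟨S, u, v, hSne, hSconn, hScard, hPS, huS, hvS, huv, hSext⟩ :=
    Stmt10.refine_piece hT.1 (by rw [Fintype.card_fin]; omega) hPne hPconn hPcard
      (by omega) hAcard hPext
  obtain ⟨T₁, T₂, hT₁ne, hT₂ne, hT₁conn, hT₂conn, hcover, hdisj, hT₁S, hT₂S⟩ :=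
    Stmt10.assemble hT.1 huS hvS huv hSext
  refine ⟨S, T₁, T₂, Stmt10.isSubtree_of_connIn hSne hSconn,
    Stmt10.isSubtree_of_connIn hT₁ne hT₁conn, Stmt10.isSubtree_of_connIn hT₂ne hT₂conn,
    hcover, ?_, ?_, hdisj, ?_, ?_⟩
  · have h1 : (S.card:ℝ) ≤ (m:ℝ) := by exact_mod_cast hScard
    calc (S.card:ℝ) ≤ (m:ℝ) := h1
      _ ≤ ε' * n := hm_le
      _ ≤ ε * n := mul_le_mul_of_nonneg_right hε'le hnR.le
  · have hmassL : L.card ≤ B ^ Dcap * ((S ∩ L).card) := by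
      have h0 : ({r} : Finset (Fin n)).card = 1 := Finset.card_singleton _
      rw [Finset.univ_inter, h0] at hPmass
      calc L.card ≤ B ^ (Stmt10.EE m n 1) * ((P ∩ L).card) := hPmass
        _ ≤ B ^ Dcap * ((S ∩ L).card) := by
            apply Nat.mul_le_mul
            · exact Nat.pow_le_pow_right (by omega) hEEcap
            · exact Finset.card_le_card (Finset.inter_subset_inter hPS subset_rfl)
    rw [inv_mul_le_iff₀ hBpow]
    calc (L.card : ℝ) ≤ ((B ^ Dcap * ((S ∩ L).card) : ℕ) : ℝ) := by exact_mod_cast hmassL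
      _ = (B:ℝ)^Dcap * (((S ∩ L).card : ℕ) : ℝ) := by push_cast; ring
  · rw [hT₁S]
    exact Finset.card_singleton u
  · rw [hT₂S]
    exact Finset.card_singleton v
end

section
/- Let d ≥ 1 and m ∈ ℕ. Suppose G is a graph in which every set A ⊆ V(G) with |A| = m satisfies |N(A)| ≥ 2dm + m. Then there is a set B ⊆ V(G) with |B| ≤ m such that the induced subgraph H = G[V(G)\B] satisfies: every nonempty subset A ⊆ V(H) with |A| ≤ m has |N_H(A)| ≥ d|A|. -/
/-- The neighbourhood `N(U)` of a vertex set `U`: all vertices outside `U` with a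
neighbour in `U`. -/
def nbr {V : Type*} (G : SimpleGraph V) (U : Finset V) : Set V :=
  {v | v ∉ U ∧ ∃ u ∈ U, G.Adj u v}

/-- If every `m`-set `A` of vertices of `G` satisfies `|N(A)| ≥ 2dm + m`, then there is
`B` with `|B| ≤ m` such that in `H = G[V(G)∖B]` every nonempty `A` with `|A| ≤ m` has
`|N_H(A)| ≥ d|A|`. (For `A ⊆ V(G)∖B`, the neighbourhood of `A` in `H` is `N_G(A)∖B`.) -/
theorem stmt13 {V : Type*} [Fintype V] (G : SimpleGraph V) (d : ℝ) (hd : 1 ≤ d) (m : ℕ)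
    (hexp : ∀ A : Finset V, A.card = m → 2 * d * m + m ≤ ((nbr G A).ncard : ℝ)) :
    ∃ B : Finset V, B.card ≤ m ∧
      ∀ A : Finset V, A.Nonempty → A.card ≤ m → (∀ a ∈ A, a ∉ B) →
        d * A.card ≤ ((nbr G A \ ↑B).ncard : ℝ) := by
  classical
  set F : Finset (Finset V) :=
    Finset.univ.filter (fun B => B.card ≤ m ∧ ((nbr G B).ncard : ℝ) ≤ d * B.card) with hF
  have hemp : (∅ : Finset V) ∈ F := by
    rw [hF, Finset.mem_filter]; simp [nbr]
  obtain ⟨B, hBF, hBmax⟩ := F.exists_max_image (fun B => B.card) ⟨∅, hemp⟩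
  have hBm : B.card ≤ m ∧ ((nbr G B).ncard : ℝ) ≤ d * B.card := by
    simpa [hF] using hBF
  refine ⟨B, hBm.1, ?_⟩
  intro A hA hAm hdisj
  by_contra hbad
  push_neg at hbad
  have hdisj' : Disjoint B A := by
    rw [Finset.disjoint_right]; exact hdisj
  have hScard : (B ∪ A).card = B.card + A.card := Finset.card_union_of_disjoint hdisj'
  -- N(B ∪ A) ⊆ N(B) ∪ (N(A) \ B)
  have h1 : nbr G (B ∪ A) ⊆ nbr G B ∪ (nbr G A \ ↑B) := by
    rintro v ⟨hv, u, hu, hadj⟩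
    rcases Finset.mem_union.1 hu with huB | huA
    · exact Or.inl ⟨fun h => hv (Finset.mem_union_left _ h), u, huB, hadj⟩
    · exact Or.inr ⟨⟨fun h => hv (Finset.mem_union_right _ h), u, huA, hadj⟩,
        fun h => hv (Finset.mem_union_left _ h)⟩
  have h2 : (nbr G (B ∪ A)).ncard ≤ (nbr G B).ncard + (nbr G A \ ↑B).ncard :=
    le_trans (Set.ncard_le_ncard h1 (Set.toFinite _)) (Set.ncard_union_le _ _)
  have h3 : ((nbr G (B ∪ A)).ncard : ℝ) < d * B.card + d * A.card := by
    calc ((nbr G (B ∪ A)).ncard : ℝ) ≤ ((nbr G B).ncard : ℝ) + ((nbr G A \ ↑B).ncard : ℝ) := by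
          exact_mod_cast h2
      _ < d * B.card + d * A.card := by
          have := hBm.2
          linarith [hbad]
  have hApos : 1 ≤ A.card := Finset.card_pos.2 hA
  by_cases hSm : (B ∪ A).card ≤ m
  · -- B ∪ A contradicts maximality of B
    have hSF : (B ∪ A) ∈ F := by
      rw [hF, Finset.mem_filter]
      refine ⟨Finset.mem_univ _, hSm, ?_⟩
      rw [hScard]
      push_cast
      ring_nf
      ring_nf at h3
      linarith [h3]
    have := hBmax _ hSF
    simp only [hScard] at this
    omega
  · push_neg at hSm
    have hBcardm : B.card ≤ m := hBm.1
    have hsub : m - B.card ≤ A.card := by omega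
    obtain ⟨A', hA'sub, hA'card⟩ := Finset.exists_subset_card_eq hsub
    set C : Finset V := B ∪ A' with hCdef
    have hCsub : C ⊆ B ∪ A := Finset.union_subset_union_right hA'sub
    have hCcard : C.card = m := by
      have hdisj'' : Disjoint B A' := hdisj'.mono_right hA'sub
      rw [hCdef, Finset.card_union_of_disjoint hdisj'', hA'card]
      omega
    have hCexp := hexp C hCcard
    -- N(C) ⊆ N(B ∪ A) ∪ ((B ∪ A) \ C)
    have h4 : nbr G C ⊆ nbr G (B ∪ A) ∪ ↑((B ∪ A) \ C) := by
      rintro v ⟨hv, u, hu, hadj⟩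
      by_cases hvS : v ∈ B ∪ A
      · exact Or.inr (by simpa using Finset.mem_sdiff.2 ⟨hvS, hv⟩)
      · exact Or.inl ⟨hvS, u, hCsub hu, hadj⟩
    have h5 : (nbr G C).ncard ≤ (nbr G (B ∪ A)).ncard + ((B ∪ A) \ C).card := by
      refine le_trans (Set.ncard_le_ncard h4 (Set.toFinite _)) ?_
      refine le_trans (Set.ncard_union_le _ _) ?_
      rw [Set.ncard_coe_finset]
    have hsd : ((B ∪ A) \ C).card = B.card + A.card - m := by
      rw [Finset.card_sdiff_of_subset hCsub, hCcard, hScard]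
    have h6 : (((B ∪ A) \ C).card : ℝ) = (B.card : ℝ) + A.card - m := by
      rw [hsd]
      have : m ≤ B.card + A.card := le_of_lt (by omega)
      push_cast [Nat.cast_sub this]
      ring
    have h7 : ((nbr G C).ncard : ℝ) < d * B.card + d * A.card + ((B.card : ℝ) + A.card - m) := by
      calc ((nbr G C).ncard : ℝ) ≤ ((nbr G (B ∪ A)).ncard : ℝ) + (((B ∪ A) \ C).card : ℝ) := by
            exact_mod_cast h5
        _ < d * B.card + d * A.card + ((B.card : ℝ) + A.card - m) := by
            rw [h6] at *; linarith [h3]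
    have hBr : (B.card : ℝ) ≤ m := by exact_mod_cast hBcardm
    have hAr : (A.card : ℝ) ≤ m := by exact_mod_cast hAm
    have hd0 : (0 : ℝ) ≤ d := le_trans zero_le_one hd
    nlinarith [hCexp, h7, mul_le_mul_of_nonneg_left hBr hd0, mul_le_mul_of_nonneg_left hAr hd0]
end

section
/- Let n, Δ ∈ ℕ, let d ∈ ℝ with d ≥ 2Δ, and let G be an (n,d)-expander. Then for every tree T ∈ T(n − 4Δ⌈n/(2d)⌉, Δ) and any vertices v ∈ V(G) and t ∈ V(T), there is an embedding of T in G with t embedded on v. -/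
/-- `G` is an `(n,d)`-expander: it has `n` vertices, `|N(X)| ≥ d|X|` for every `X` with
`1 ≤ |X| < ⌈n/2d⌉`, and any two disjoint sets of size `⌈n/2d⌉` have an edge between them. -/
def IsExpander {V : Type*} [Fintype V] (G : SimpleGraph V) (n : ℕ) (d : ℝ) : Prop :=
  Fintype.card V = n ∧
  (∀ X : Finset V, 1 ≤ X.card → X.card < ⌈(n : ℝ) / (2 * d)⌉₊ →
    d * X.card ≤ ((nbr G X).ncard : ℝ)) ∧
  (∀ X Y : Finset V, Disjoint X Y → X.card = ⌈(n : ℝ) / (2 * d)⌉₊ →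
    Y.card = ⌈(n : ℝ) / (2 * d)⌉₊ → ∃ x ∈ X, ∃ y ∈ Y, G.Adj x y)

/-- `G` contains a copy of `T` (an injective graph homomorphism from `T` to `G`). -/
def ContainsCopy {V W : Type*} (T : SimpleGraph V) (G : SimpleGraph W) : Prop :=
  ∃ f : T →g G, Function.Injective f

namespace S18
open Finset

variable {V : Type*} [Fintype V] [DecidableEq V] (G : SimpleGraph V)

open scoped Classical in
noncomputable def nbrF (X : Finset V) : Finset V :=
  univ.filter (fun v => v ∉ X ∧ ∃ u ∈ X, G.Adj u v)

variable {G}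

lemma mem_nbrF {X : Finset V} {v : V} : v ∈ nbrF G X ↔ v ∉ X ∧ ∃ u ∈ X, G.Adj u v := by
  classical simp [nbrF]

lemma nbr_eq_nbrF (G : SimpleGraph V) (X : Finset V) : nbr G X = ↑(nbrF G X) := by
  ext v; simp [nbr, mem_nbrF]

lemma ncard_nbr (G : SimpleGraph V) (X : Finset V) : (nbr G X).ncard = (nbrF G X).card := by
  rw [nbr_eq_nbrF, Set.ncard_coe_finset]

noncomputable def ball (G : SimpleGraph V) (X : Finset V) : Finset V := X ∪ nbrF G X

lemma mem_ball {X : Finset V} {v : V} : v ∈ ball G X ↔ v ∈ X ∨ ∃ u ∈ X, G.Adj u v := by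
  constructor
  · intro h
    rcases mem_union.1 h with h | h
    · exact Or.inl h
    · exact Or.inr (mem_nbrF.1 h).2
  · intro h
    by_cases hv : v ∈ X
    · exact mem_union.2 (Or.inl hv)
    · rcases h with h | h
      · exact absurd h hv
      · exact mem_union.2 (Or.inr (mem_nbrF.2 ⟨hv, h⟩))

lemma ball_union (X Y : Finset V) : ball G (X ∪ Y) = ball G X ∪ ball G Y := by
  ext v
  simp only [mem_ball, mem_union]
  constructor
  · rintro (⟨h | h⟩ | ⟨u, hu | hu, hadj⟩)
    · exact Or.inl (Or.inl h)
    · exact Or.inr (Or.inl h)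
    · exact Or.inl (Or.inr ⟨u, hu, hadj⟩)
    · exact Or.inr (Or.inr ⟨u, hu, hadj⟩)
  · rintro ((h | ⟨u, hu, hadj⟩) | (h | ⟨u, hu, hadj⟩))
    · exact Or.inl (Or.inl h)
    · exact Or.inr ⟨u, Or.inl hu, hadj⟩
    · exact Or.inl (Or.inr h)
    · exact Or.inr ⟨u, Or.inr hu, hadj⟩

lemma ball_mono {X Y : Finset V} (h : X ⊆ Y) : ball G X ⊆ ball G Y := by
  intro v hv
  rcases mem_ball.1 hv with hv | ⟨u, hu, hadj⟩
  · exact mem_ball.2 (Or.inl (h hv))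
  · exact mem_ball.2 (Or.inr ⟨u, h hu, hadj⟩)

lemma card_ball_sdiff (X U : Finset V) :
    (ball G X \ U).card = (X \ U).card + (nbrF G X \ U).card := by
  rw [ball, union_sdiff_distrib, card_union_of_disjoint]
  refine disjoint_left.2 fun v hv hv' => ?_
  exact (mem_nbrF.1 (mem_sdiff.1 hv').1).1 (mem_sdiff.1 hv).1

lemma submod (U X Y : Finset V) :
    (nbrF G (X ∪ Y) \ U).card + (nbrF G (X ∩ Y) \ U).card ≤
      (nbrF G X \ U).card + (nbrF G Y \ U).card := by
  have h1 : (ball G (X ∪ Y) \ U).card + (ball G (X ∩ Y) \ U).card ≤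
      (ball G X \ U).card + (ball G Y \ U).card := by
    have e1 : ball G (X ∪ Y) \ U = (ball G X \ U) ∪ (ball G Y \ U) := by
      rw [ball_union, union_sdiff_distrib]
    have e2 : ball G (X ∩ Y) \ U ⊆ (ball G X \ U) ∩ (ball G Y \ U) := by
      intro v hv
      rw [mem_sdiff] at hv
      exact mem_inter.2 ⟨mem_sdiff.2 ⟨ball_mono inter_subset_left hv.1, hv.2⟩,
        mem_sdiff.2 ⟨ball_mono inter_subset_right hv.1, hv.2⟩⟩
    calc (ball G (X ∪ Y) \ U).card + (ball G (X ∩ Y) \ U).card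
        ≤ ((ball G X \ U) ∪ (ball G Y \ U)).card + ((ball G X \ U) ∩ (ball G Y \ U)).card := by
          rw [e1]; exact Nat.add_le_add_left (card_le_card e2) _
      _ = (ball G X \ U).card + (ball G Y \ U).card := card_union_add_card_inter _ _
  have h2 : ((X ∪ Y) \ U).card + ((X ∩ Y) \ U).card = (X \ U).card + (Y \ U).card := by
    have e3 : (X ∩ Y) \ U = (X \ U) ∩ (Y \ U) := by
      ext a; simp only [mem_sdiff, mem_inter]; tauto
    rw [union_sdiff_distrib, e3, card_union_add_card_inter]
  have b1 := card_ball_sdiff (G := G) (X ∪ Y) U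
  have b2 := card_ball_sdiff (G := G) (X ∩ Y) U
  have b3 := card_ball_sdiff (G := G) X U
  have b4 := card_ball_sdiff (G := G) Y U
  omega

variable {α : Type*} [Fintype α] [DecidableEq α]


open scoped Classical in
noncomputable def rem (T : SimpleGraph α) (S : Finset α) (a : α) : ℕ :=
  (univ.filter (fun b => T.Adj a b ∧ b ∉ S)).card

lemma rem_mono {T : SimpleGraph α} {S S' : Finset α} (h : S ⊆ S') (a : α) :
    rem T S' a ≤ rem T S a := by
  classical
  refine card_le_card fun b hb => ?_
  simp only [rem, mem_filter] at hb ⊢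
  exact ⟨hb.1, hb.2.1, fun hbS => hb.2.2 (h hbS)⟩

lemma one_le_rem {T : SimpleGraph α} {S : Finset α} {x y : α} (hy : y ∉ S) (hxy : T.Adj x y) :
    1 ≤ rem T S x := by
  classical
  rw [Nat.one_le_iff_ne_zero, ← Nat.pos_iff_ne_zero, rem, card_pos]
  exact ⟨y, by simp [hxy, hy]⟩

noncomputable def pot (G : SimpleGraph V) (T : SimpleGraph α) (Δ : ℕ) (S : Finset α)
    (f : α → V) (X : Finset V) : ℤ :=
  ((nbrF G X \ S.image f).card : ℤ) - ∑ a ∈ S.filter (fun a => f a ∈ X), (rem T S a : ℤ)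
    - (2 * (Δ : ℤ) - 2) * ((X \ S.image f).card : ℤ)

/-- The invariant: all sets of size at most `2 m₀` have nonnegative potential. -/
def Inv (G : SimpleGraph V) (T : SimpleGraph α) (Δ m₀ : ℕ) (S : Finset α) (f : α → V) : Prop :=
  ∀ X : Finset V, X.card ≤ 2 * m₀ → 0 ≤ pot G T Δ S f X

lemma image_filter_mem (S : Finset α) (f : α → V) (X : Finset V) :
    (S.filter (fun a => f a ∈ X)).image f = X ∩ S.image f := by
  ext u
  simp only [mem_image, mem_filter, mem_inter]
  constructor
  · rintro ⟨a, ⟨haS, haX⟩, rfl⟩; exact ⟨haX, a, haS, rfl⟩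
  · rintro ⟨hu, a, haS, rfl⟩; exact ⟨a, ⟨haS, hu⟩, rfl⟩

lemma card_filter_mem {S : Finset α} {f : α → V} (hinj : Set.InjOn f S) (X : Finset V) :
    (S.filter (fun a => f a ∈ X)).card = (X ∩ S.image f).card := by
  rw [← image_filter_mem]
  exact (card_image_of_injOn (hinj.mono (Finset.coe_subset.2 (filter_subset _ _)))).symm

lemma sum_rem_le {T : SimpleGraph α} {Δ : ℕ} (hdeg : ∀ a, rem T ∅ a ≤ Δ) (S : Finset α)
    (f : α → V) (hinj : Set.InjOn f S) (X : Finset V) :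
    ∑ a ∈ S.filter (fun a => f a ∈ X), (rem T S a : ℤ) ≤ (Δ : ℤ) * ((X ∩ S.image f).card : ℤ) := by
  calc ∑ a ∈ S.filter (fun a => f a ∈ X), (rem T S a : ℤ)
      ≤ ∑ _a ∈ S.filter (fun a => f a ∈ X), (Δ : ℤ) := by
        refine Finset.sum_le_sum fun a _ => ?_
        exact_mod_cast (rem_mono (empty_subset S) a).trans (hdeg a)
    _ = (Δ : ℤ) * ((S.filter (fun a => f a ∈ X)).card : ℤ) := by
        rw [Finset.sum_const]; push_cast; ring
    _ = (Δ : ℤ) * ((X ∩ S.image f).card : ℤ) := by rw [card_filter_mem hinj]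

lemma sum_rem_nonneg (T : SimpleGraph α) (S S' : Finset α) (f : α → V) (X : Finset V) :
    0 ≤ ∑ a ∈ S.filter (fun a => f a ∈ X), (rem T S' a : ℤ) :=
  Finset.sum_nonneg fun a _ => by positivity

lemma ball_subset_aux {G : SimpleGraph V} (X U : Finset V)
    (hsub : ball G X ⊆ (nbrF G X \ U) ∪ X ∪ (U \ X)) :
    (ball G X).card ≤ (nbrF G X \ U).card + X.card + (U \ X).card :=
  (card_le_card hsub).trans ((card_union_le _ _).trans (Nat.add_le_add_right (card_union_le _ _) _))

section ClaimA
variable {G : SimpleGraph V} {T : SimpleGraph α} {n Δ m₀ : ℕ}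

lemma ball_subset (X U : Finset V) :
    ball G X ⊆ (nbrF G X \ U) ∪ X ∪ (U \ X) := by
  intro u hu
  rcases mem_ball.1 hu with h | h
  · exact mem_union.2 (Or.inl (mem_union.2 (Or.inr h)))
  · by_cases hX : u ∈ X
    · exact mem_union.2 (Or.inl (mem_union.2 (Or.inr hX)))
    · by_cases hUm : u ∈ U
      · exact mem_union.2 (Or.inr (mem_sdiff.2 ⟨hUm, hX⟩))
      · exact mem_union.2 (Or.inl (mem_union.2 (Or.inl (mem_sdiff.2 ⟨mem_nbrF.2 ⟨hX, h⟩, hUm⟩))))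

lemma claimA
    (hE2 : ∀ X : Finset V, m₀ ≤ X.card → n + 1 ≤ (ball G X).card + m₀)
    (hΔ : 1 ≤ Δ) (hdeg : ∀ a, rem T ∅ a ≤ Δ)
    {S : Finset α} {f : α → V} (hU : S.card + 4 * Δ * m₀ ≤ n) (hinj : Set.InjOn f S)
    {X : Finset V} (hX1 : m₀ ≤ X.card) (hX2 : X.card ≤ 2 * m₀) :
    1 ≤ pot G T Δ S f X := by
  set U := S.image f with hUdef
  have hUcard : U.card ≤ S.card := card_image_le
  have key1 : (ball G X).card ≤ (nbrF G X \ U).card + X.card + (U \ X).card :=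
    ball_subset_aux X U (ball_subset X U)
  have key2 : n + 1 ≤ (ball G X).card + m₀ := hE2 X hX1
  have key3 : ∑ a ∈ S.filter (fun a => f a ∈ X), (rem T S a : ℤ)
      ≤ (Δ : ℤ) * ((X ∩ U).card : ℤ) := sum_rem_le hdeg S f hinj X
  have key4 : (U \ X).card + (U ∩ X).card = U.card := card_sdiff_add_card_inter U X
  have key5 : (X \ U).card + (X ∩ U).card = X.card := card_sdiff_add_card_inter X U
  have key6 : (X ∩ U).card = (U ∩ X).card := by rw [inter_comm]
  rw [pot]
  set a := (X ∩ U).card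
  set b := (X \ U).card
  have hab : a + b ≤ 2 * m₀ := by omega
  have h1 : ((Δ : ℤ)) * a + (2 * (Δ : ℤ) - 1) * b ≤ (2 * (Δ : ℤ) - 1) * (a + b) := by
    have h1Δ : (1 : ℤ) ≤ (Δ : ℤ) := by exact_mod_cast hΔ
    have : (0 : ℤ) ≤ ((Δ : ℤ) - 1) * a :=
      mul_nonneg (by linarith) (Int.natCast_nonneg a)
    nlinarith
  have h2 : (2 * (Δ : ℤ) - 1) * (a + b) ≤ (2 * (Δ : ℤ) - 1) * (2 * m₀) := by
    have h1Δ : (1 : ℤ) ≤ (Δ : ℤ) := by exact_mod_cast hΔ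
    have : (0 : ℤ) ≤ 2 * (Δ : ℤ) - 1 := by linarith
    have : ((a : ℤ) + b) ≤ (2 * m₀ : ℕ) := by exact_mod_cast hab
    nlinarith
  -- cast everything to ℤ and finish
  have c1 : ((ball G X).card : ℤ) ≤ ((nbrF G X \ U).card : ℤ) + X.card + (U \ X).card := by
    exact_mod_cast key1
  have c2 : (n : ℤ) + 1 ≤ ((ball G X).card : ℤ) + m₀ := by exact_mod_cast key2
  have c4 : ((U \ X).card : ℤ) + (U ∩ X).card = U.card := by exact_mod_cast key4
  have c5 : ((b : ℤ)) + a = X.card := by exact_mod_cast key5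
  have c6 : ((a : ℤ)) = ((U ∩ X).card : ℤ) := by exact_mod_cast key6
  have c7 : ((U.card : ℤ)) + 4 * Δ * m₀ ≤ n := by
    have : U.card + 4 * Δ * m₀ ≤ n := le_trans (by omega) hU
    exact_mod_cast this
  linarith
lemma injOn_singleton (f : α → V) (t : α) : Set.InjOn f ({t} : Finset α) := by
  intro x hx y hy _
  simp only [coe_singleton, Set.mem_singleton_iff] at hx hy
  rw [hx, hy]

lemma base
    (hE1 : ∀ X : Finset V, 1 ≤ X.card → X.card < m₀ → 2 * Δ * X.card ≤ (nbrF G X).card)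
    (hE2 : ∀ X : Finset V, m₀ ≤ X.card → n + 1 ≤ (ball G X).card + m₀)
    (hΔ : 1 ≤ Δ) (hdeg : ∀ a, rem T ∅ a ≤ Δ)
    (hn : 1 + 4 * Δ * m₀ ≤ n) (t : α) (v : V) :
    Inv G T Δ m₀ ({t} : Finset α) (fun _ => v) := by
  intro X hX2
  rcases Nat.eq_zero_or_pos X.card with h0 | h1
  · have hXe : X = ∅ := card_eq_zero.1 h0
    subst hXe
    have hne : nbrF G (∅ : Finset V) = ∅ := by
      ext u; simp [mem_nbrF]
    simp [pot, hne]
  rcases lt_or_ge X.card m₀ with hsmall | hbig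
  · -- small case
    have hU : ({t} : Finset α).image (fun _ => v) = {v} := by simp
    have hE := hE1 X h1 hsmall
    have hsum : ∑ a ∈ ({t} : Finset α).filter (fun a => (fun _ : α => v) a ∈ X), (rem T {t} a : ℤ)
        ≤ (Δ : ℤ) * ((X ∩ {v}).card : ℤ) := by
      have h := sum_rem_le (T := T) hdeg ({t} : Finset α) (fun _ => v)
        (injOn_singleton (fun _ => v) t) X
      rwa [hU] at h
    rw [pot, hU]
    by_cases hv : v ∈ X
    · have e1 : nbrF G X \ {v} = nbrF G X := by
        rw [Finset.sdiff_eq_self_iff_disjoint, disjoint_singleton_right]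
        exact fun h => (mem_nbrF.1 h).1 hv
      have e2 : (X \ {v}).card = X.card - 1 := by
        rw [sdiff_singleton_eq_erase, card_erase_of_mem hv]
      have e3 : X ∩ {v} = {v} := inter_singleton_of_mem hv
      rw [e1, e2]
      rw [e3] at hsum
      simp only [card_singleton, Nat.cast_one, mul_one] at hsum
      have cE : (2 * Δ * X.card : ℤ) ≤ ((nbrF G X).card : ℤ) := by exact_mod_cast hE
      have c1 : (1 : ℤ) ≤ (X.card : ℤ) := by exact_mod_cast h1
      have cΔ : (1 : ℤ) ≤ (Δ : ℤ) := by exact_mod_cast hΔ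
      have e2' : ((X.card - 1 : ℕ) : ℤ) = (X.card : ℤ) - 1 := by
        have : 1 ≤ X.card := h1
        push_cast [this]; ring
      rw [e2']
      nlinarith [hsum]
    · have e1 : ((nbrF G X).card : ℤ) ≤ ((nbrF G X \ {v}).card : ℤ) + 1 := by
        have := card_le_card_sdiff_add_card (s := nbrF G X) (t := ({v} : Finset V))
        have h' : (nbrF G X).card ≤ (nbrF G X \ {v}).card + 1 := by simpa using this
        exact_mod_cast h'
      have e2 : X \ {v} = X := by
        rw [Finset.sdiff_eq_self_iff_disjoint, disjoint_singleton_right]; exact hv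
      have e3 : ({t} : Finset α).filter (fun a => (fun _ : α => v) a ∈ X) = ∅ := by
        rw [filter_eq_empty_iff]; intro a _; simpa using hv
      rw [e2, e3]
      simp only [sum_empty]
      have cE : (2 * Δ * X.card : ℤ) ≤ ((nbrF G X).card : ℤ) := by exact_mod_cast hE
      have c1 : (1 : ℤ) ≤ (X.card : ℤ) := by exact_mod_cast h1
      have cΔ : (1 : ℤ) ≤ (Δ : ℤ) := by exact_mod_cast hΔ
      nlinarith
  · have h := claimA (T := T) hE2 hΔ hdeg (S := ({t} : Finset α)) (f := fun _ => v)
      (by simpa using hn) (injOn_singleton (fun _ => v) t) hbig hX2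
    linarith

end ClaimA



open Finset

variable {V : Type*} [Fintype V] [DecidableEq V]
variable {α : Type*} [Fintype α] [DecidableEq α]
variable {G : SimpleGraph V} {T : SimpleGraph α} {n Δ m₀ : ℕ}

open scoped Classical

lemma pot_empty (S : Finset α) (f : α → V) : pot G T Δ S f (∅ : Finset V) = 0 := by
  have hne : nbrF G (∅ : Finset V) = ∅ := by ext u; simp [mem_nbrF]
  simp [pot, hne]

lemma pot_submod (S : Finset α) (f : α → V) (X Y : Finset V) :
    pot G T Δ S f (X ∪ Y) + pot G T Δ S f (X ∩ Y) ≤ pot G T Δ S f X + pot G T Δ S f Y := by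
  set U := S.image f with hU
  have hA : ((nbrF G (X ∪ Y) \ U).card : ℤ) + ((nbrF G (X ∩ Y) \ U).card : ℤ)
      ≤ ((nbrF G X \ U).card : ℤ) + ((nbrF G Y \ U).card : ℤ) := by
    exact_mod_cast submod U X Y
  have hBset1 : S.filter (fun a => f a ∈ X ∪ Y)
      = S.filter (fun a => f a ∈ X) ∪ S.filter (fun a => f a ∈ Y) := by
    ext a; simp only [mem_filter, mem_union]; tauto
  have hBset2 : S.filter (fun a => f a ∈ X ∩ Y)
      = S.filter (fun a => f a ∈ X) ∩ S.filter (fun a => f a ∈ Y) := by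
    ext a; simp only [mem_filter, mem_inter]; tauto
  have hB : ∑ a ∈ S.filter (fun a => f a ∈ X ∪ Y), (rem T S a : ℤ)
        + ∑ a ∈ S.filter (fun a => f a ∈ X ∩ Y), (rem T S a : ℤ)
      = ∑ a ∈ S.filter (fun a => f a ∈ X), (rem T S a : ℤ)
        + ∑ a ∈ S.filter (fun a => f a ∈ Y), (rem T S a : ℤ) := by
    rw [hBset1, hBset2]
    exact sum_union_inter
  have hCset2 : (X ∩ Y) \ U = (X \ U) ∩ (Y \ U) := by
    ext a; simp only [mem_sdiff, mem_inter]; tauto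
  have hC : (((X ∪ Y) \ U).card : ℤ) + (((X ∩ Y) \ U).card : ℤ)
      = ((X \ U).card : ℤ) + ((Y \ U).card : ℤ) := by
    rw [union_sdiff_distrib, hCset2]
    exact_mod_cast card_union_add_card_inter (X \ U) (Y \ U)
  have hC' : (2 * (Δ : ℤ) - 2) * (((X ∪ Y) \ U).card : ℤ)
        + (2 * (Δ : ℤ) - 2) * (((X ∩ Y) \ U).card : ℤ)
      = (2 * (Δ : ℤ) - 2) * ((X \ U).card : ℤ) + (2 * (Δ : ℤ) - 2) * ((Y \ U).card : ℤ) := by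
    rw [← mul_add, ← mul_add, hC]
  simp only [pot, ← hU]
  linarith

lemma pot_insert {S : Finset α} {f : α → V} {x y : α} {w : V}
    (hy : y ∉ S) (hw : w ∉ S.image f) (hx : x ∈ S)
    (huniq : ∀ a ∈ S, T.Adj a y → a = x) (hxy : T.Adj x y)
    (X : Finset V) :
    pot G T Δ (insert y S) (Function.update f y w) X =
      pot G T Δ S f X - (if w ∈ nbrF G X then 1 else 0) + (if f x ∈ X then 1 else 0)
        - (if w ∈ X then ((rem T ∅ y : ℤ) - 1) - (2 * (Δ : ℤ) - 2) else 0) := by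
  set U := S.image f with hUdef
  set S' := insert y S with hS'def
  set f' := Function.update f y w with hf'def
  have hfeq : ∀ a ∈ S, f' a = f a := fun a ha =>
    Function.update_of_ne (by rintro rfl; exact hy ha) _ _
  have himg : S'.image f' = insert w U := by
    rw [hS'def, image_insert]
    rw [hf'def, Function.update_self]
    congr 1
    rw [hUdef]
    exact image_congr (fun a ha => hfeq a ha)
  have hA : ((nbrF G X \ S'.image f').card : ℤ)
      = ((nbrF G X \ U).card : ℤ) - (if w ∈ nbrF G X then 1 else 0) := by
    rw [himg, sdiff_insert]
    by_cases hwn : w ∈ nbrF G X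
    · rw [if_pos hwn, card_erase_of_mem (mem_sdiff.2 ⟨hwn, hw⟩)]
      have h1 : 1 ≤ (nbrF G X \ U).card := card_pos.2 ⟨w, mem_sdiff.2 ⟨hwn, hw⟩⟩
      push_cast [h1]
      ring
    · rw [if_neg hwn, erase_eq_of_notMem (fun hc => hwn (mem_sdiff.1 hc).1), sub_zero]
  have hremS : ∀ a ∈ S, (rem T S' a : ℤ) = (rem T S a : ℤ) - (if T.Adj a y then 1 else 0) := by
    intro a _
    classical
    have hset : (univ.filter (fun b => T.Adj a b ∧ b ∉ S') : Finset α)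
        = (univ.filter (fun b => T.Adj a b ∧ b ∉ S)).erase y := by
      ext b
      simp only [mem_filter, mem_erase, mem_univ, true_and, hS'def, mem_insert]
      tauto
    rw [show rem T S' a = ((univ.filter (fun b => T.Adj a b ∧ b ∉ S')).card) from rfl,
      show rem T S a = ((univ.filter (fun b => T.Adj a b ∧ b ∉ S)).card) from rfl, hset]
    by_cases hay : T.Adj a y
    · have hymem : y ∈ univ.filter (fun b => T.Adj a b ∧ b ∉ S) := by
        simp [hay, hy]
      rw [if_pos hay, card_erase_of_mem hymem]
      have h1 : 1 ≤ (univ.filter (fun b => T.Adj a b ∧ b ∉ S)).card := card_pos.2 ⟨y, hymem⟩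
      push_cast [h1]
      ring
    · rw [if_neg hay, erase_eq_of_notMem (by simp [hay]), sub_zero]
  have hremy : (rem T S' y : ℤ) = (rem T ∅ y : ℤ) - 1 := by
    classical
    have hset : (univ.filter (fun b => T.Adj y b ∧ b ∉ S') : Finset α)
        = (univ.filter (fun b => T.Adj y b ∧ b ∉ (∅ : Finset α))).erase x := by
      ext b
      simp only [mem_filter, mem_erase, mem_univ, true_and, hS'def, mem_insert, notMem_empty,
        not_false_iff, and_true]
      constructor
      · rintro ⟨hadj, hby⟩
        push_neg at hby
        exact ⟨fun hbx => hby.2 (hbx ▸ hx), hadj⟩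
      · rintro ⟨hbx, hadj⟩
        refine ⟨hadj, ?_⟩
        rintro (hby | hbS)
        · exact T.irrefl (hby ▸ hadj)
        · exact hbx (huniq b hbS hadj.symm)
    have hxmem : x ∈ univ.filter (fun b => T.Adj y b ∧ b ∉ (∅ : Finset α)) := by
      simp [hxy.symm]
    rw [show rem T S' y = ((univ.filter (fun b => T.Adj y b ∧ b ∉ S')).card) from rfl,
      show rem T ∅ y = ((univ.filter (fun b => T.Adj y b ∧ b ∉ (∅ : Finset α))).card) from rfl,
      hset, card_erase_of_mem hxmem]
    have h1 : 1 ≤ (univ.filter (fun b => T.Adj y b ∧ b ∉ (∅ : Finset α))).card :=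
      card_pos.2 ⟨x, hxmem⟩
    push_cast [h1]
    ring
  have hfilterS : S.filter (fun a => f' a ∈ X) = S.filter (fun a => f a ∈ X) :=
    filter_congr (fun a ha => by rw [hfeq a ha])
  have hindic : ∑ a ∈ S.filter (fun a => f a ∈ X), ((if T.Adj a y then 1 else 0) : ℤ)
      = (if f x ∈ X then 1 else 0) := by
    classical
    rw [Finset.sum_boole]
    have hset : (S.filter (fun a => f a ∈ X)).filter (fun a => T.Adj a y)
        = (if f x ∈ X then ({x} : Finset α) else ∅) := by
      ext a
      simp only [mem_filter]
      by_cases hfx : f x ∈ X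
      · rw [if_pos hfx]
        simp only [mem_singleton]
        constructor
        · rintro ⟨⟨haS, _⟩, hadj⟩
          exact huniq a haS hadj
        · rintro rfl
          exact ⟨⟨hx, hfx⟩, hxy⟩
      · rw [if_neg hfx]
        simp only [notMem_empty, iff_false]
        rintro ⟨⟨haS, hfa⟩, hadj⟩
        exact hfx ((huniq a haS hadj) ▸ hfa)
    rw [hset]
    by_cases hfx : f x ∈ X
    · rw [if_pos hfx, if_pos hfx]; simp
    · rw [if_neg hfx, if_neg hfx]; simp
  have hsum2 : ∑ a ∈ S.filter (fun a => f a ∈ X), (rem T S' a : ℤ)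
      = ∑ a ∈ S.filter (fun a => f a ∈ X), (rem T S a : ℤ) - (if f x ∈ X then 1 else 0) := by
    rw [Finset.sum_congr rfl (fun a ha => hremS a (mem_filter.1 ha).1), Finset.sum_sub_distrib,
      hindic]
  have hsum : ∑ a ∈ S'.filter (fun a => f' a ∈ X), (rem T S' a : ℤ)
      = ∑ a ∈ S.filter (fun a => f a ∈ X), (rem T S a : ℤ)
        - (if f x ∈ X then 1 else 0)
        + (if w ∈ X then (rem T ∅ y : ℤ) - 1 else 0) := by
    have hfy : f' y = w := Function.update_self _ _ _
    rw [hS'def, filter_insert, hfy, hfilterS]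
    by_cases hwX : w ∈ X
    · rw [if_pos hwX, if_pos hwX]
      have hynot : y ∉ S.filter (fun a => f a ∈ X) := fun hc => hy (mem_filter.1 hc).1
      rw [Finset.sum_insert hynot, hremy, hsum2]
      ring
    · rw [if_neg hwX, if_neg hwX, hsum2, add_zero]
  have hC : ((X \ S'.image f').card : ℤ) = ((X \ U).card : ℤ) - (if w ∈ X then 1 else 0) := by
    rw [himg, sdiff_insert]
    by_cases hwX : w ∈ X
    · rw [if_pos hwX, card_erase_of_mem (mem_sdiff.2 ⟨hwX, hw⟩)]
      have h1 : 1 ≤ (X \ U).card := card_pos.2 ⟨w, mem_sdiff.2 ⟨hwX, hw⟩⟩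
      push_cast [h1]
      ring
    · rw [if_neg hwX, erase_eq_of_notMem (fun hc => hwX (mem_sdiff.1 hc).1), sub_zero]
  rw [pot, pot, hA, hsum, hC]
  by_cases h1 : w ∈ nbrF G X <;> by_cases h2 : f x ∈ X <;> by_cases h3 : w ∈ X <;>
    simp only [h1, h2, h3, if_true, if_false] <;> ring

lemma extend
    (hE2 : ∀ X : Finset V, m₀ ≤ X.card → n + 1 ≤ (ball G X).card + m₀)
    (hΔ : 1 ≤ Δ) (hdeg : ∀ a, rem T (∅ : Finset α) a ≤ Δ) (hm₀ : 1 ≤ m₀)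
    {S : Finset α} {f : α → V} {x y : α}
    (hScard : S.card + 4 * Δ * m₀ ≤ n)
    (hinj : Set.InjOn f S)
    (hx : x ∈ S) (hy : y ∉ S) (hxy : T.Adj x y)
    (huniq : ∀ a ∈ S, T.Adj a y → a = x)
    (hInv : Inv G T Δ m₀ S f) :
    ∃ w : V, w ∉ S.image f ∧ G.Adj (f x) w ∧
      Inv G T Δ m₀ (insert y S) (Function.update f y w) := by
  classical
  set U := S.image f with hUdef
  set C := nbrF G ({f x} : Finset V) \ U with hCdef
  have hCmem : ∀ w ∈ C, w ∉ U ∧ G.Adj (f x) w := by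
    intro w hw
    rcases mem_sdiff.1 hw with ⟨hw1, hw2⟩
    rcases mem_nbrF.1 hw1 with ⟨-, u, hu, hadj⟩
    rw [mem_singleton.1 hu] at hadj
    exact ⟨hw2, hadj⟩
  -- the singleton {f x} has small potential pieces
  have hfilter1 : S.filter (fun a => f a ∈ ({f x} : Finset V)) = {x} := by
    ext a
    simp only [mem_filter, mem_singleton]
    constructor
    · rintro ⟨haS, hfa⟩
      exact hinj haS hx hfa
    · rintro rfl
      exact ⟨hx, rfl⟩
  have hCne : C.Nonempty := by
    have h0 := hInv {f x} (by rw [card_singleton]; omega)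
    rw [pot, hfilter1] at h0
    have hXU : ({f x} : Finset V) \ U = ∅ := by
      rw [sdiff_eq_empty_iff_subset]
      intro u hu
      rw [mem_singleton.1 hu]
      exact mem_image_of_mem f hx
    rw [hXU] at h0
    simp only [sum_singleton, card_empty, Nat.cast_zero, mul_zero, sub_zero] at h0
    have hr : (1 : ℤ) ≤ (rem T S x : ℤ) := by exact_mod_cast one_le_rem hy hxy
    have h1 : (1 : ℤ) ≤ ((nbrF G ({f x} : Finset V) \ U).card : ℤ) := by linarith
    exact card_pos.1 (by exact_mod_cast h1)
  by_contra hcon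
  push_neg at hcon
  -- every candidate has a blocking tight set
  have hblock : ∀ w ∈ C, ∃ Xb : Finset V, Xb.card ≤ 2 * m₀ ∧ pot G T Δ S f Xb = 0 ∧
      f x ∉ Xb ∧ w ∈ nbrF G Xb := by
    intro w hw
    obtain ⟨hwU, hwadj⟩ := hCmem w hw
    have hnoInv := hcon w hwU hwadj
    rw [Inv] at hnoInv
    push_neg at hnoInv
    obtain ⟨X, hX2, hXneg⟩ := hnoInv
    have hrec := pot_insert (G := G) (Δ := Δ) hy hwU hx huniq hxy X
    have h0 := hInv X hX2
    have hdegy : (rem T (∅ : Finset α) y : ℤ) ≤ (Δ : ℤ) := by exact_mod_cast hdeg y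
    have hΔ' : (1 : ℤ) ≤ (Δ : ℤ) := by exact_mod_cast hΔ
    by_cases hwX : w ∈ X
    · exfalso
      have hwn : w ∉ nbrF G X := fun hc => (mem_nbrF.1 hc).1 hwX
      rw [if_neg hwn, if_pos hwX] at hrec
      by_cases hfxX : f x ∈ X
      · rw [if_pos hfxX] at hrec; linarith
      · rw [if_neg hfxX] at hrec; linarith
    · rw [if_neg hwX, sub_zero] at hrec
      by_cases hwn : w ∈ nbrF G X
      · by_cases hfxX : f x ∈ X
        · exfalso
          rw [if_pos hwn, if_pos hfxX] at hrec
          linarith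
        · refine ⟨X, hX2, ?_, hfxX, hwn⟩
          rw [if_pos hwn, if_neg hfxX] at hrec
          have : pot G T Δ S f X ≤ 0 := by linarith
          linarith
      · exfalso
        rw [if_neg hwn] at hrec
        by_cases hfxX : f x ∈ X
        · rw [if_pos hfxX] at hrec; linarith
        · rw [if_neg hfxX] at hrec; linarith
  choose! Xb hXb1 hXb2 hXb3 hXb4 using hblock
  -- the union of the tight blocking sets is tight and small
  have hsmall : ∀ Z : Finset V, Z.card ≤ 2 * m₀ → pot G T Δ S f Z = 0 → Z.card < m₀ := by
    intro Z hZ2 hZ0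
    by_contra hc
    push_neg at hc
    have h1 := claimA (T := T) hE2 hΔ hdeg (S := S) (f := f) hScard hinj hc hZ2
    rw [hZ0] at h1
    exact absurd h1 (by norm_num)
  have hunion : ∀ D : Finset V, D ⊆ C → ∃ Y : Finset V, (∀ w ∈ D, Xb w ⊆ Y) ∧
      pot G T Δ S f Y = 0 ∧ Y.card < m₀ ∧ f x ∉ Y := by
    intro D
    induction D using Finset.induction_on with
    | empty =>
      intro _
      exact ⟨∅, by simp, pot_empty S f, by simp; omega, notMem_empty _⟩
    | @insert w D hwD ih =>
      intro hsub
      have hwC : w ∈ C := hsub (mem_insert_self w D)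
      obtain ⟨Y, hY1, hY2, hY3, hY4⟩ := ih (fun z hz => hsub (mem_insert_of_mem hz))
      have hXbcard : (Xb w).card < m₀ := hsmall _ (hXb1 w hwC) (hXb2 w hwC)
      have hucard : (Xb w ∪ Y).card ≤ 2 * m₀ := le_trans (card_union_le _ _) (by omega)
      have hicard : (Xb w ∩ Y).card ≤ 2 * m₀ :=
        le_trans (card_le_card inter_subset_left) (by omega)
      have hsm := pot_submod (G := G) (T := T) (Δ := Δ) S f (Xb w) Y
      have hpu := hInv _ hucard
      have hpi := hInv _ hicard
      have h0 : pot G T Δ S f (Xb w ∪ Y) = 0 := by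
        rw [hXb2 w hwC, hY2] at hsm
        linarith
      refine ⟨Xb w ∪ Y, ?_, h0, hsmall _ hucard h0, ?_⟩
      · intro z hz
        rcases mem_insert.1 hz with rfl | hz
        · exact subset_union_left
        · exact (hY1 z hz).trans subset_union_right
      · simp only [mem_union]
        rintro (hc | hc)
        · exact hXb3 w hwC hc
        · exact hY4 hc
  obtain ⟨Y, hY1, hY2, hY3, hY4⟩ := hunion C (Finset.Subset.refl C)
  -- final contradiction with the set `insert (f x) Y`
  set Xs := insert (f x) Y with hXsdef
  have hXscard : Xs.card ≤ 2 * m₀ := le_trans (card_insert_le _ _) (by omega)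
  have h0 := hInv Xs hXscard
  have hfxU : f x ∈ U := mem_image_of_mem f hx
  have hsub : nbrF G Xs \ U ⊆ nbrF G Y \ U := by
    intro u hu
    rcases mem_sdiff.1 hu with ⟨hu1, hu2⟩
    rcases mem_nbrF.1 hu1 with ⟨huXs, z, hz, hadj⟩
    have huY : u ∉ Y := fun hc => huXs (mem_insert_of_mem hc)
    rcases mem_insert.1 hz with rfl | hzY
    · have huC : u ∈ C := by
        rw [hCdef]
        refine mem_sdiff.2 ⟨mem_nbrF.2 ⟨?_, f x, mem_singleton_self (f x), hadj⟩, hu2⟩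
        intro hc
        exact (G.ne_of_adj hadj).symm (mem_singleton.1 hc)
      have hunbr := hXb4 u huC
      rcases mem_nbrF.1 hunbr with ⟨-, z', hz', hadj'⟩
      exact mem_sdiff.2 ⟨mem_nbrF.2 ⟨huY, z', hY1 u huC hz', hadj'⟩, hu2⟩
    · exact mem_sdiff.2 ⟨mem_nbrF.2 ⟨huY, z, hzY, hadj⟩, hu2⟩
  have hcard1 : ((nbrF G Xs \ U).card : ℤ) ≤ ((nbrF G Y \ U).card : ℤ) := by
    exact_mod_cast card_le_card hsub
  have hCset : Xs \ U = Y \ U := by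
    rw [hXsdef, insert_sdiff_of_mem _ hfxU]
  have hfilter2 : S.filter (fun a => f a ∈ Xs) = insert x (S.filter (fun a => f a ∈ Y)) := by
    ext a
    simp only [mem_filter, hXsdef, mem_insert]
    constructor
    · rintro ⟨haS, hfa | hfa⟩
      · exact Or.inl (hinj haS hx hfa)
      · exact Or.inr ⟨haS, hfa⟩
    · rintro (rfl | ⟨haS, hfa⟩)
      · exact ⟨hx, Or.inl rfl⟩
      · exact ⟨haS, Or.inr hfa⟩
  have hxnot : x ∉ S.filter (fun a => f a ∈ Y) := fun hc => hY4 (mem_filter.1 hc).2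
  rw [pot, hfilter2, Finset.sum_insert hxnot, hCset, ← hUdef] at h0
  rw [pot, ← hUdef] at hY2
  have hr : (1 : ℤ) ≤ (rem T S x : ℤ) := by exact_mod_cast one_le_rem hy hxy
  linarith


open Finset SimpleGraph

variable {α : Type*} [Fintype α] [DecidableEq α] {T : SimpleGraph α}

/-- `S` is connected to `t` inside `S`. -/
def ConnS (T : SimpleGraph α) (t : α) (S : Finset α) : Prop :=
  ∀ z ∈ S, ∃ p : T.Walk t z, ∀ b ∈ p.support, b ∈ S

lemma cross {S : Finset α} {u z : α} (p : T.Walk u z) (hu : u ∈ S) (hz : z ∉ S) :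
    ∃ x ∈ S, ∃ y, y ∉ S ∧ T.Adj x y := by
  induction p with
  | nil => exact absurd hu hz
  | @cons a b c hab q ih =>
    by_cases hb : b ∈ S
    · exact ih hb hz
    · exact ⟨a, hu, b, hb, hab⟩

lemma uniq_nbr (hac : T.IsAcyclic) {t : α} {S : Finset α} (hconn : ConnS T t S)
    {y x₁ x₂ : α} (hy : y ∉ S) (h1 : x₁ ∈ S) (h2 : x₂ ∈ S)
    (ha1 : T.Adj x₁ y) (ha2 : T.Adj x₂ y) : x₁ = x₂ := by
  obtain ⟨p₁, hp₁⟩ := hconn x₁ h1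
  obtain ⟨p₂, hp₂⟩ := hconn x₂ h2
  set q : T.Walk x₁ x₂ := p₁.reverse.append p₂ with hq
  have hqsup : ∀ b ∈ q.support, b ∈ S := by
    intro b hb
    rw [hq, Walk.mem_support_append_iff] at hb
    rcases hb with hb | hb
    · exact hp₁ b (by rwa [Walk.support_reverse, List.mem_reverse] at hb)
    · exact hp₂ b hb
  set P : T.Path x₁ x₂ := q.toPath with hP
  have hysup : y ∉ P.1.support := by
    intro hc
    exact hy (hqsup y (Walk.support_toPath_subset q hc))
  have hBpath : (SimpleGraph.Walk.cons ha1.symm P.1).IsPath := P.2.cons hysup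
  have hAB : (SimpleGraph.Path.singleton ha2.symm) = ⟨SimpleGraph.Walk.cons ha1.symm P.1, hBpath⟩ :=
    (SimpleGraph.isAcyclic_iff_path_unique.mp hac) _ _
  have hsup : [y, x₂] = y :: P.1.support := by
    have := congrArg (fun (r : T.Path y x₂) => r.1.support) hAB
    simpa [SimpleGraph.Path.singleton] using this
  have hPsup : P.1.support = x₁ :: P.1.support.tail := Walk.support_eq_cons P.1
  rw [hPsup] at hsup
  simp only [List.cons.injEq, true_and] at hsup
  exact hsup.1.symm

variable {V : Type*} [Fintype V] [DecidableEq V] {G : SimpleGraph V} {n Δ m₀ : ℕ}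

lemma grow (hT : T.IsTree)
    (hE2 : ∀ X : Finset V, m₀ ≤ X.card → n + 1 ≤ (ball G X).card + m₀)
    (hΔ : 1 ≤ Δ) (hdeg : ∀ a, rem T (∅ : Finset α) a ≤ Δ) (hm₀ : 1 ≤ m₀)
    (hα : Fintype.card α + 4 * Δ * m₀ ≤ n) (t : α) (v : V) :
    ∀ (k : ℕ) (S : Finset α) (f : α → V), (univ \ S).card = k → t ∈ S → ConnS T t S →
      Set.InjOn f S → (∀ a ∈ S, ∀ b ∈ S, T.Adj a b → G.Adj (f a) (f b)) → f t = v →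
      Inv G T Δ m₀ S f →
      ∃ g : α → V, Function.Injective g ∧ (∀ a b : α, T.Adj a b → G.Adj (g a) (g b)) ∧ g t = v := by
  intro k
  induction k with
  | zero =>
    intro S f h0 ht hconn hinj hhom hft _
    have hS : S = univ := by
      have he : univ \ S = ∅ := card_eq_zero.1 h0
      have := sdiff_eq_empty_iff_subset.1 he
      exact eq_univ_iff_forall.2 fun a => this (mem_univ a)
    subst hS
    refine ⟨f, ?_, ?_, hft⟩
    · intro a b hab
      exact hinj (by simp) (by simp) hab
    · intro a b hab
      exact hhom a (mem_univ a) b (mem_univ b) hab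
  | succ k ih =>
    intro S f hk ht hconn hinj hhom hft hInv
    obtain ⟨z, hzmem⟩ : ∃ z, z ∈ univ \ S := by
      apply card_pos.1
      omega
    have hz : z ∉ S := (mem_sdiff.1 hzmem).2
    obtain ⟨p⟩ := hT.isConnected.preconnected t z
    obtain ⟨x, hxS, y, hyS, hxy⟩ := cross p ht hz
    have huniq : ∀ a ∈ S, T.Adj a y → a = x := fun a ha hay =>
      uniq_nbr hT.IsAcyclic hconn hyS ha hxS hay hxy
    have hScard : S.card + 4 * Δ * m₀ ≤ n := by
      have h1 : S.card ≤ Fintype.card α := by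
        simpa using card_le_card (subset_univ S)
      omega
    obtain ⟨w, hwU, hwadj, hInv'⟩ :=
      extend hE2 hΔ hdeg hm₀ hScard hinj hxS hyS hxy huniq hInv
    have hty : t ≠ y := fun hc => hyS (hc ▸ ht)
    have hupd : ∀ c ∈ S, Function.update f y w c = f c := fun c hc =>
      Function.update_of_ne (by rintro rfl; exact hyS hc) _ _
    apply ih (insert y S) (Function.update f y w)
    · have hset : univ \ insert y S = (univ \ S).erase y := by
        ext b
        simp only [mem_sdiff, mem_erase, mem_univ, true_and, mem_insert]
        tauto
      have h2 : y ∈ univ \ S := mem_sdiff.2 ⟨mem_univ y, hyS⟩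
      rw [hset, card_erase_of_mem h2, hk]
      omega
    · exact mem_insert_of_mem ht
    · intro b hb
      rcases mem_insert.1 hb with rfl | hb
      · obtain ⟨q, hq⟩ := hconn x hxS
        refine ⟨q.concat hxy, ?_⟩
        intro c hc
        rw [Walk.support_concat, List.mem_append] at hc
        rcases hc with hc | hc
        · exact mem_insert_of_mem (hq c hc)
        · simp only [List.mem_singleton] at hc
          exact hc ▸ mem_insert_self _ _
      · obtain ⟨q, hq⟩ := hconn b hb
        exact ⟨q, fun c hc => mem_insert_of_mem (hq c hc)⟩
    · intro a ha b hb heq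
      simp only [coe_insert, Set.mem_insert_iff, mem_coe] at ha hb
      rcases ha with rfl | ha <;> rcases hb with rfl | hb
      · rfl
      · exfalso
        rw [Function.update_self, hupd b hb] at heq
        exact hwU (heq ▸ mem_image_of_mem f hb)
      · exfalso
        rw [Function.update_self, hupd a ha] at heq
        exact hwU (heq ▸ mem_image_of_mem f ha)
      · rw [hupd a ha, hupd b hb] at heq
        exact hinj ha hb heq
    · intro a ha b hb hab
      rcases mem_insert.1 ha with rfl | ha' <;> rcases mem_insert.1 hb with rfl | hb'
      · exact absurd hab (T.irrefl)
      · have hbx : b = x := huniq b hb' hab.symm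
        rw [Function.update_self, hupd b hb', hbx]
        exact hwadj.symm
      · have hax : a = x := huniq a ha' hab
        rw [Function.update_self, hupd a ha', hax]
        exact hwadj
      · rw [hupd a ha', hupd b hb']
        exact hhom a ha' b hb' hab
    · rw [Function.update_of_ne hty]
      exact hft
    · exact hInv'

end S18

open Finset in
/-- If `d ≥ 2Δ` and `G` is an `(n,d)`-expander, then every tree `T` on
`n - 4Δ⌈n/2d⌉` vertices with maximum degree at most `Δ` embeds into `G`, with any
prescribed vertex `t` of `T` embedded onto any prescribed vertex `v` of `G`. -/
theorem stmt18 (n Δ : ℕ) (d : ℝ) (hd : 2 * (Δ : ℝ) ≤ d) {V : Type*} [Fintype V]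
    (G : SimpleGraph V) (hG : IsExpander G n d)
    (T : SimpleGraph (Fin (n - 4 * Δ * ⌈(n : ℝ) / (2 * d)⌉₊))) (hT : T.IsTree)
    (hdeg : ∀ x, (T.neighborSet x).ncard ≤ Δ)
    (v : V) (t : Fin (n - 4 * Δ * ⌈(n : ℝ) / (2 * d)⌉₊)) :
    ∃ f : T →g G, Function.Injective f ∧ f t = v := by
  classical
  suffices H : ∀ (α : Type) (_ : Fintype α) (_ : DecidableEq α) (T' : SimpleGraph α),
      T'.IsTree → (∀ x, (T'.neighborSet x).ncard ≤ Δ) →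
      Fintype.card α = n - 4 * Δ * ⌈(n : ℝ) / (2 * d)⌉₊ → ∀ t' : α,
      ∃ g : α → V, Function.Injective g ∧ (∀ a b : α, T'.Adj a b → G.Adj (g a) (g b)) ∧
        g t' = v by
    obtain ⟨g, hg1, hg2, hg3⟩ := H _ inferInstance inferInstance T hT hdeg (by
      rw [Fintype.card_fin]) t
    exact ⟨⟨g, fun hab => hg2 _ _ hab⟩, hg1, hg3⟩
  intro α _ _ T' hT' hdeg' hcardα t'
  obtain ⟨hcard, hexp, hpair⟩ := hG
  set m₀ := ⌈(n : ℝ) / (2 * d)⌉₊ with hm₀def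
  set M := n - 4 * Δ * m₀ with hMdef
  have hMpos : 1 ≤ M := by
    rw [← hcardα]
    exact Fintype.card_pos_iff.2 hT'.isConnected.nonempty
  by_cases hM1 : M = 1
  · -- one-vertex tree
    have hsub : ∀ a b : α, a = b :=
      fun a b => Fintype.card_le_one_iff.1 (by omega) a b
    refine ⟨fun _ => v, ?_, ?_, rfl⟩
    · intro a b _
      exact hsub a b
    · intro a b hab
      exact absurd ((hsub a b) ▸ hab) (T'.irrefl)
  have hM2 : 2 ≤ M := by omega
  have hΔ1 : 1 ≤ Δ := by
    by_contra hc
    push_neg at hc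
    obtain ⟨a, b, hab⟩ := Fintype.one_lt_card_iff_nontrivial.1 (by omega : 1 < Fintype.card α)
      |>.exists_pair_ne
    obtain ⟨p⟩ := hT'.isConnected.preconnected a b
    cases p with
    | nil => exact hab rfl
    | cons hadj q =>
      have hmem : _ ∈ T'.neighborSet a := hadj
      have h1 : 0 < (T'.neighborSet a).ncard :=
        (Set.ncard_pos (Set.toFinite _)).2 ⟨_, hmem⟩
      have h2 := hdeg' a
      omega
  have hd2 : (0 : ℝ) < d := by
    have h1 : (1 : ℝ) ≤ (Δ : ℝ) := by exact_mod_cast hΔ1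
    linarith
  have hn1 : 1 ≤ n := by omega
  have hm₀1 : 1 ≤ m₀ := by
    rw [hm₀def, Nat.one_le_ceil_iff]
    apply div_pos
    · exact_mod_cast hn1
    · linarith
  have hE1 : ∀ X : Finset V, 1 ≤ X.card → X.card < m₀ → 2 * Δ * X.card ≤ (S18.nbrF G X).card := by
    intro X h1 h2
    have h3 := hexp X h1 h2
    rw [S18.ncard_nbr] at h3
    have h4 : ((2 * Δ * X.card : ℕ) : ℝ) ≤ ((S18.nbrF G X).card : ℝ) := by
      push_cast
      nlinarith [Nat.cast_nonneg (α := ℝ) X.card]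
    exact_mod_cast h4
  have hE2 : ∀ X : Finset V, m₀ ≤ X.card → n + 1 ≤ (S18.ball G X).card + m₀ := by
    intro X hX
    by_contra hcon
    push_neg at hcon
    obtain ⟨X', hX'sub, hX'card⟩ := Finset.exists_subset_card_eq hX
    have hcompl : m₀ ≤ (univ \ S18.ball G X).card := by
      have hc1 : (univ \ S18.ball G X).card = n - (S18.ball G X).card := by
        rw [card_sdiff_of_subset (subset_univ _), card_univ, hcard]
      omega
    obtain ⟨Y, hYsub, hYcard⟩ := Finset.exists_subset_card_eq hcompl
    have hdisj : Disjoint X' Y := by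
      rw [disjoint_left]
      intro a haX' haY
      have h1 : a ∈ S18.ball G X := S18.mem_ball.2 (Or.inl (hX'sub haX'))
      exact (mem_sdiff.1 (hYsub haY)).2 h1
    obtain ⟨x', hx', y', hy', hadj⟩ := hpair X' Y hdisj hX'card hYcard
    have h1 : y' ∈ S18.ball G X := S18.mem_ball.2 (Or.inr ⟨x', hX'sub hx', hadj⟩)
    exact (mem_sdiff.1 (hYsub hy')).2 h1
  have hdegrem : ∀ a, S18.rem T' ∅ a ≤ Δ := by
    intro a
    have h1 : T'.neighborSet a = ↑(univ.filter (fun b => T'.Adj a b ∧ b ∉ (∅ : Finset α))) := by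
      ext b
      simp [SimpleGraph.neighborSet]
    have h2 := hdeg' a
    rw [h1, Set.ncard_coe_finset] at h2
    rw [S18.rem]
    convert h2 using 2
  have hα : Fintype.card α + 4 * Δ * m₀ ≤ n := by omega
  have hbase := S18.base (G := G) (T := T') (n := n) (m₀ := m₀) (Δ := Δ)
    hE1 hE2 hΔ1 hdegrem (by omega) t' v
  have hconn1 : S18.ConnS T' t' ({t'} : Finset α) := by
    intro z hz
    rw [mem_singleton] at hz
    subst hz
    exact ⟨SimpleGraph.Walk.nil, by simp⟩
  exact S18.grow hT' hE2 hΔ1 hdegrem hm₀1 hα t' v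
    ((univ : Finset α) \ {t'}).card {t'} (fun _ => v) rfl (mem_singleton_self t') hconn1
    (S18.injOn_singleton _ t')
    (by
      intro a ha b hb hab
      rw [mem_singleton] at ha hb
      subst ha; subst hb
      exact absurd hab (T'.irrefl))
    rfl hbase
end
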